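/- arXiv:1402.0441 — 12 statements merged into one kernel-verified Lean document; each statement's English description precedes it below -/
import Mathlib

section
/- Let G be an abelian topological group whose topology is induced by a complete, translation-invariant metric d (i.e. d(a+c, b+c) = d(a,b) for all a,b,c ∈ G), and let h : ℕ → G. Define φ : Set ℕ → [0,∞] by φ(∅) = 0 and φ(A) = sup{ d(0, ∑_{n∈F} h(n)) : F a nonempty finite subset of A } for A ≠ ∅. Then φ is a lower semicontinuous submeasure on ℕ, and for every A ⊆ ℕ the series ∑_{n∈A} h(n) converges unconditionally in G if and only if A ∈ Exh(φ), i.e. φ(A \ [0,N)) → 0 as N → ∞. -/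
open Filter Topology

/-- for `h : ℕ → G` in a complete abelian group with translation-invariant
metric, the function `φ(A) = sup { d(0, ∑_{n∈F} h n) : ∅ ≠ F ⊆ A finite }` is an lsc
submeasure and unconditional convergence of `∑_{n∈A} h n` is equivalent to `A ∈ Exh(φ)`. -/
theorem stmt0 {G : Type*} [AddCommGroup G] [MetricSpace G] [CompleteSpace G]
    (hinv : ∀ a b c : G, dist (a + c) (b + c) = dist a b)
    (h : ℕ → G) (φ : Set ℕ → ENNReal)
    (hφ : ∀ A : Set ℕ,
      φ A = ⨆ (F : Finset ℕ) (_ : F.Nonempty ∧ ↑F ⊆ A),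
        ENNReal.ofReal (dist (0 : G) (∑ n ∈ F, h n))) :
    φ ∅ = 0 ∧
    (∀ A B : Set ℕ, A ⊆ B → φ A ≤ φ B) ∧
    (∀ A B : Set ℕ, φ (A ∪ B) ≤ φ A + φ B) ∧
    (∀ n : ℕ, φ {n} < ⊤) ∧
    (∀ A : Set ℕ, φ A = ⨆ (F : Finset ℕ) (_ : ↑F ⊆ A), φ ↑F) ∧
    (∀ A : Set ℕ, Summable (fun n : A => h n) ↔
      Tendsto (fun N : ℕ => φ (A \ Set.Iio N)) atTop (𝓝 0)) := by
  classical
  have hneg : ∀ a b : G, dist (-a) (-b) = dist a b := by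
    intro a b
    have H := hinv (-a) (-b) (a + b)
    rw [neg_add_cancel_left] at H
    rw [show -b + (a + b) = a by rw [add_comm a b, neg_add_cancel_left]] at H
    rw [← H, dist_comm]
  have hadd : ∀ a b a' b' : G, dist (a + b) (a' + b') ≤ dist a a' + dist b b' := by
    intro a b a' b'
    calc dist (a + b) (a' + b') ≤ dist (a + b) (a' + b) + dist (a' + b) (a' + b') :=
          dist_triangle _ _ _
      _ = dist a a' + dist b b' := by
          rw [hinv, add_comm a' b, add_comm a' b', hinv]
  haveI : IsUniformAddGroup G := by
    constructor
    rw [Metric.uniformContinuous_iff]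
    intro ε hε
    refine ⟨ε / 2, by positivity, fun {p q} hpq => ?_⟩
    rw [Prod.dist_eq, max_lt_iff] at hpq
    have h1 : dist p.1 q.1 < ε / 2 := hpq.1
    have h2 : dist p.2 q.2 < ε / 2 := hpq.2
    calc dist (p.1 - p.2) (q.1 - q.2) ≤ dist p.1 q.1 + dist p.2 q.2 := by
          simpa [sub_eq_add_neg, hneg] using hadd p.1 (-p.2) q.1 (-q.2)
      _ < ε / 2 + ε / 2 := add_lt_add h1 h2
      _ = ε := by ring
  have hd0 : ∀ x y : G, dist 0 (x + y) ≤ dist 0 x + dist 0 y := by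
    intro x y
    calc dist 0 (x + y) ≤ dist 0 x + dist x (x + y) := dist_triangle _ _ _
      _ = dist 0 x + dist 0 y := by
          congr 1
          have H := hinv 0 y x
          rw [zero_add, add_comm y x] at H
          exact H
  have hbound : ∀ (S : Set ℕ) (F : Finset ℕ), ↑F ⊆ S →
      ENNReal.ofReal (dist (0 : G) (∑ n ∈ F, h n)) ≤ φ S := by
    intro S F hFS
    rcases F.eq_empty_or_nonempty with rfl | hne
    · simp
    · rw [hφ]
      exact le_iSup₂_of_le F ⟨hne, hFS⟩ le_rfl
  have hmono : ∀ A B : Set ℕ, A ⊆ B → φ A ≤ φ B := by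
    intro A B hAB
    rw [hφ A]
    exact iSup₂_le fun F hF => hbound B F (hF.2.trans hAB)
  refine ⟨?_, hmono, ?_, ?_, ?_, ?_⟩
  · rw [hφ]
    refine le_antisymm (iSup₂_le fun F hF => ?_) zero_le
    exact absurd (Finset.coe_eq_empty.mp (Set.subset_empty_iff.mp hF.2)) hF.1.ne_empty
  · intro A B
    rw [hφ (A ∪ B)]
    apply iSup₂_le
    intro F hF
    have hsum : ∑ n ∈ F, h n
        = ∑ n ∈ F.filter (· ∈ A), h n + ∑ n ∈ F.filter (¬ · ∈ A), h n :=
      (Finset.sum_filter_add_sum_filter_not F _ _).symm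
    have hF1 : ↑(F.filter (· ∈ A)) ⊆ A := by
      intro x hx
      simp only [Finset.coe_filter, Set.mem_setOf_eq] at hx
      exact hx.2
    have hF2 : ↑(F.filter (¬ · ∈ A)) ⊆ B := by
      intro x hx
      simp only [Finset.coe_filter, Set.mem_setOf_eq] at hx
      rcases hF.2 hx.1 with hA | hB
      · exact absurd hA hx.2
      · exact hB
    calc ENNReal.ofReal (dist (0 : G) (∑ n ∈ F, h n))
        ≤ ENNReal.ofReal (dist (0 : G) (∑ n ∈ F.filter (· ∈ A), h n)
            + dist (0 : G) (∑ n ∈ F.filter (¬ · ∈ A), h n)) := by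
          rw [hsum]; exact ENNReal.ofReal_le_ofReal (hd0 _ _)
      _ ≤ ENNReal.ofReal (dist (0 : G) (∑ n ∈ F.filter (· ∈ A), h n))
            + ENNReal.ofReal (dist (0 : G) (∑ n ∈ F.filter (¬ · ∈ A), h n)) :=
          ENNReal.ofReal_add_le
      _ ≤ φ A + φ B := add_le_add (hbound A _ hF1) (hbound B _ hF2)
  · intro n
    rw [hφ]
    have hub : (⨆ (F : Finset ℕ) (_ : F.Nonempty ∧ ↑F ⊆ ({n} : Set ℕ)),
        ENNReal.ofReal (dist (0 : G) (∑ n ∈ F, h n)))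
        ≤ ENNReal.ofReal (dist (0 : G) (h n)) := by
      apply iSup₂_le
      intro F hF
      have hFs : F = {n} := by
        rcases Finset.subset_singleton_iff.mp (by exact_mod_cast hF.2 :
            F ⊆ ({n} : Finset ℕ)) with rfl | rfl
        · exact absurd rfl hF.1.ne_empty
        · rfl
      rw [hFs, Finset.sum_singleton]
    exact lt_of_le_of_lt hub ENNReal.ofReal_lt_top
  · intro A
    refine le_antisymm ?_ (iSup₂_le fun F hF => hmono _ _ hF)
    rw [hφ A]
    exact iSup₂_le fun F hF => le_iSup₂_of_le F hF.2 (hbound _ F subset_rfl)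
  · intro A
    constructor
    · intro hA
      rw [ENNReal.tendsto_atTop_zero]
      intro ε hε
      have hmin_ne : min ε 1 ≠ ⊤ := ne_top_of_le_ne_top ENNReal.one_ne_top (min_le_right _ _)
      have hrpos : 0 < (min ε 1).toReal :=
        ENNReal.toReal_pos (ne_of_gt (lt_min hε zero_lt_one)) hmin_ne
      have hg : Summable (A.indicator h) := summable_subtype_iff_indicator.mp hA
      obtain ⟨s, hs⟩ := summable_iff_vanishing.mp hg (Metric.ball 0 (min ε 1).toReal)
        (Metric.ball_mem_nhds 0 hrpos)
      refine ⟨s.sup id + 1, fun N hN => ?_⟩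
      rw [hφ]
      apply iSup₂_le
      intro F hF
      have hdisj : Disjoint F s := by
        rw [Finset.disjoint_left]
        intro x hxF hxs
        have h1 : N ≤ x := by
          have := (hF.2 hxF).2
          simpa [Set.mem_Iio, not_lt] using this
        have h2 : x ≤ s.sup id := Finset.le_sup (f := id) hxs
        omega
      have hsum : ∑ n ∈ F, A.indicator h n = ∑ n ∈ F, h n :=
        Finset.sum_congr rfl fun x hx => Set.indicator_of_mem ((hF.2 hx).1) h
      have hmem := hs F hdisj
      rw [Metric.mem_ball, hsum] at hmem
      have hlt : dist (0 : G) (∑ n ∈ F, h n) < (min ε 1).toReal := by rwa [dist_comm]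
      calc ENNReal.ofReal (dist (0 : G) (∑ n ∈ F, h n))
          ≤ ENNReal.ofReal (min ε 1).toReal := ENNReal.ofReal_le_ofReal hlt.le
        _ = min ε 1 := ENNReal.ofReal_toReal hmin_ne
        _ ≤ ε := min_le_left _ _
    · intro ht
      apply summable_subtype_iff_indicator.mpr
      rw [summable_iff_vanishing]
      intro e he
      obtain ⟨ε, hε, hball⟩ := Metric.mem_nhds_iff.mp he
      have h0 : (0 : ENNReal) < ENNReal.ofReal ε := ENNReal.ofReal_pos.mpr hε
      obtain ⟨N, hN⟩ := (ht.eventually_lt_const h0).exists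
      refine ⟨Finset.range N, fun t hdisj => ?_⟩
      have hsum : ∑ n ∈ t, A.indicator h n = ∑ n ∈ t.filter (· ∈ A), h n := by
        rw [Finset.sum_filter]
        exact Finset.sum_congr rfl fun x _ => by simp [Set.indicator_apply]
      have hFsub : ↑(t.filter (· ∈ A)) ⊆ A \ Set.Iio N := by
        intro x hx
        simp only [Finset.coe_filter, Set.mem_setOf_eq] at hx
        refine ⟨hx.2, ?_⟩
        simp only [Set.mem_Iio, not_lt]
        by_contra hxN
        push_neg at hxN
        exact Finset.disjoint_left.mp hdisj hx.1 (Finset.mem_range.mpr hxN)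
      apply hball
      rw [Metric.mem_ball, hsum]
      rcases (t.filter (· ∈ A)).eq_empty_or_nonempty with hFe | hFne
      · rw [hFe]
        simpa using hε
      · have hle := hbound _ _ hFsub
        have hlt : ENNReal.ofReal (dist (0 : G) (∑ n ∈ t.filter (· ∈ A), h n))
            < ENNReal.ofReal ε := lt_of_le_of_lt hle hN
        rw [dist_comm]
        exact (ENNReal.ofReal_lt_ofReal_iff hε).mp hlt
end

section
/- Let G be an abelian topological group whose topology is induced by a complete, translation-invariant metric d (i.e. d(a+c, b+c) = d(a,b) for all a,b,c ∈ G), and let h : ℕ → G. If (A_k)_{k∈ℕ} is a sequence of subsets of ℕ such that for every k the series ∑_{n∈A_k} h(n) converges unconditionally in G, then there exists A ⊆ ℕ such that ∑_{n∈A} h(n) converges unconditionally in G and A_k \ A is finite for every k. (In other words, the family of sets on which the series converges unconditionally is a P-ideal.) -/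
open Filter Topology

section Aux

variable {G : Type*} [NormedAddCommGroup G] [CompleteSpace G]

private lemma indicator_union_summable {f : ℕ → G} {s t : Set ℕ}
    (hs : Summable (s.indicator f)) (ht : Summable (t.indicator f)) :
    Summable ((s ∪ t).indicator f) := by
  have h1 : Summable ((t \ s).indicator f) := by
    have := ht.indicator (t \ s)
    rwa [Set.indicator_indicator, Set.inter_eq_left.mpr Set.diff_subset] at this
  have h2 := hs.add h1
  have h3 : (s ∪ (t \ s)).indicator f = fun n => s.indicator f n + (t \ s).indicator f n :=
    Set.indicator_union_of_disjoint disjoint_sdiff_self_right f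
  rw [Set.union_diff_self] at h3
  rw [h3]
  exact h2

private lemma aux_key (h : ℕ → G) (A : ℕ → Set ℕ)
    (hA : ∀ k : ℕ, Summable (fun n : A k => h n)) :
    ∃ B : Set ℕ, Summable (fun n : B => h n) ∧ ∀ k : ℕ, (A k \ B).Finite := by
  classical
  have hA' : ∀ k, Summable ((A k).indicator h) := fun k =>
    summable_subtype_iff_indicator.mp (hA k)
  set C : ℕ → Set ℕ := Set.accumulate A with hCdef
  have hCacc : ∀ k, A k ⊆ C k := fun k => Set.subset_accumulate
  have hCmono : ∀ j k, j ≤ k → C j ⊆ C k := fun j k hjk => Set.monotone_accumulate hjk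
  have hCsum : ∀ k, Summable ((C k).indicator h) := by
    intro k
    induction k with
    | zero =>
        have : C 0 = A 0 := by
          ext x; simp [hCdef, Set.mem_accumulate, Nat.le_zero]
        rw [this]; exact hA' 0
    | succ n ih =>
        have : C (n + 1) = C n ∪ A (n + 1) := by
          ext x
          simp only [hCdef, Set.mem_accumulate, Set.mem_union]
          constructor
          · rintro ⟨j, hj, hx⟩
            rcases Nat.le_succ_iff.mp hj with hj' | hj'
            · exact Or.inl ⟨j, hj', hx⟩
            · exact Or.inr (by subst hj'; exact hx)
          · rintro (⟨j, hj, hx⟩ | hx)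
            · exact ⟨j, hj.trans (Nat.le_succ n), hx⟩
            · exact ⟨n + 1, le_rfl, hx⟩
        rw [this]
        exact indicator_union_summable ih (hA' (n + 1))
  -- thresholds
  have hNex : ∀ k : ℕ, ∃ N : ℕ, ∀ t : Finset ℕ, (∀ n ∈ t, N ≤ n) →
      ‖∑ n ∈ t, (C k).indicator h n‖ < (2⁻¹ : ℝ) ^ k := by
    intro k
    obtain ⟨s, hs⟩ := summable_iff_vanishing.mp (hCsum k) (Metric.ball 0 ((2⁻¹ : ℝ) ^ k))
      (Metric.ball_mem_nhds 0 (by positivity))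
    refine ⟨s.sup id + 1, fun t ht => ?_⟩
    have hd : Disjoint t s := by
      rw [Finset.disjoint_left]
      intro n hnt hns
      have h1 : n ≤ s.sup id := Finset.le_sup (f := id) hns
      have h2 := ht n hnt
      omega
    simpa [mem_ball_zero_iff] using hs t hd
  choose N hN using hNex
  set B : Set ℕ := ⋃ k, A k ∩ {n | N k ≤ n} with hBdef
  refine ⟨B, ?_, ?_⟩
  · suffices hs : Summable (B.indicator h) by
      exact summable_subtype_iff_indicator.mpr hs
    rw [summable_iff_vanishing]
    intro e he
    obtain ⟨ε, hε, hball⟩ := Metric.mem_nhds_iff.mp he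
    obtain ⟨K, hK⟩ := exists_pow_lt_of_lt_one (by positivity : (0 : ℝ) < ε / 2)
      (by norm_num : (2⁻¹ : ℝ) < 1)
    refine ⟨Finset.range (N K), fun t htd => ?_⟩
    apply hball
    rw [mem_ball_zero_iff]
    have htK : ∀ n ∈ t, N K ≤ n := by
      intro n hn
      by_contra hlt
      exact (Finset.disjoint_left.mp htd hn) (Finset.mem_range.mpr (by omega))
    set t' : Finset ℕ := t.filter (fun n => n ∈ B) with ht'def
    have hsum1 : ∑ n ∈ t, B.indicator h n = ∑ n ∈ t', h n := by
      rw [ht'def, Finset.sum_filter]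
      exact Finset.sum_congr rfl fun n _ => by
        by_cases hn : n ∈ B <;> simp [Set.indicator_apply, hn]
    -- bucket function
    have hbex : ∀ n ∈ t', ∃ j, K ≤ j ∧ n ∈ C j ∧ N j ≤ n := by
      intro n hn
      obtain ⟨hnt, hnB⟩ := Finset.mem_filter.mp hn
      obtain ⟨k, hk1, hk2⟩ := Set.mem_iUnion.mp hnB
      rcases le_or_gt k K with hkK | hkK
      · exact ⟨K, le_rfl, hCmono k K hkK (hCacc k hk1), htK n hnt⟩
      · exact ⟨k, hkK.le, hCacc k hk1, hk2⟩
    set b : ℕ → ℕ := fun n =>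
      if hn : ∃ j, K ≤ j ∧ n ∈ C j ∧ N j ≤ n then Nat.find hn else 0 with hbdef
    have hbspec : ∀ n ∈ t', K ≤ b n ∧ n ∈ C (b n) ∧ N (b n) ≤ n := by
      intro n hn
      have hex := hbex n hn
      simp only [hbdef, dif_pos hex]
      exact Nat.find_spec hex
    set J : Finset ℕ := t'.image b with hJdef
    have hJK : ∀ j ∈ J, K ≤ j := by
      intro j hj
      obtain ⟨n, hn, rfl⟩ := Finset.mem_image.mp hj
      exact (hbspec n hn).1
    have hsum2 : ∑ j ∈ J, ∑ n ∈ t'.filter (fun n => b n = j), h n = ∑ n ∈ t', h n :=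
      Finset.sum_fiberwise_of_maps_to (fun n hn => Finset.mem_image_of_mem b hn) h
    have hinner : ∀ j ∈ J, ‖∑ n ∈ t'.filter (fun n => b n = j), h n‖ ≤ (2⁻¹ : ℝ) ^ j := by
      intro j hj
      have heq : ∑ n ∈ t'.filter (fun n => b n = j), h n
          = ∑ n ∈ t'.filter (fun n => b n = j), (C j).indicator h n := by
        refine Finset.sum_congr rfl fun n hn => ?_
        obtain ⟨hn1, hn2⟩ := Finset.mem_filter.mp hn
        have := (hbspec n hn1).2.1
        rw [hn2] at this
        exact (Set.indicator_of_mem this h).symm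
      rw [heq]
      refine (hN j _ fun n hn => ?_).le
      obtain ⟨hn1, hn2⟩ := Finset.mem_filter.mp hn
      have := (hbspec n hn1).2.2
      rwa [hn2] at this
    calc ‖∑ n ∈ t, B.indicator h n‖ = ‖∑ j ∈ J, ∑ n ∈ t'.filter (fun n => b n = j), h n‖ := by
          rw [hsum1, hsum2]
      _ ≤ ∑ j ∈ J, ‖∑ n ∈ t'.filter (fun n => b n = j), h n‖ := norm_sum_le _ _
      _ ≤ ∑ j ∈ J, (2⁻¹ : ℝ) ^ j := Finset.sum_le_sum hinner
      _ ≤ (2⁻¹ : ℝ) ^ K * 2 := by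
          have hinj : ∀ x ∈ J, ∀ y ∈ J, x - K = y - K → x = y := by
            intro x hx y hy hxy
            have := hJK x hx; have := hJK y hy; omega
          have himg : ∑ i ∈ J.image (fun j => j - K), (2⁻¹ : ℝ) ^ (i + K)
              = ∑ j ∈ J, (2⁻¹ : ℝ) ^ (j - K + K) := Finset.sum_image hinj
          have hJeq : ∑ j ∈ J, (2⁻¹ : ℝ) ^ j = ∑ j ∈ J, (2⁻¹ : ℝ) ^ (j - K + K) :=
            Finset.sum_congr rfl fun j hj => by rw [Nat.sub_add_cancel (hJK j hj)]
          rw [hJeq, ← himg]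
          have hsummable : Summable (fun i : ℕ => (2⁻¹ : ℝ) ^ (i + K)) := by
            simp_rw [pow_add]
            exact (summable_geometric_of_lt_one (by norm_num) (by norm_num)).mul_right _
          have hle := Summable.sum_le_tsum (J.image (fun j => j - K))
            (fun i _ => by positivity) hsummable
          refine hle.trans_eq ?_
          simp_rw [pow_add]
          rw [tsum_mul_right, tsum_geometric_of_lt_one (by norm_num) (by norm_num)]
          ring
      _ < ε := by nlinarith [hK]
  · intro k
    refine (Set.finite_Iio (N k)).subset fun n hn => ?_
    obtain ⟨hn1, hn2⟩ := hn
    simp only [Set.mem_Iio]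
    by_contra hge
    exact hn2 (Set.mem_iUnion.mpr ⟨k, hn1, by simp only [Set.mem_setOf_eq]; omega⟩)

end Aux

/-- in a complete abelian group with translation-invariant metric, the family
of sets on which `∑ h n` converges unconditionally is a P-ideal. -/
theorem stmt1 {G : Type*} [AddCommGroup G] [MetricSpace G] [CompleteSpace G]
    (hinv : ∀ a b c : G, dist (a + c) (b + c) = dist a b)
    (h : ℕ → G) (A : ℕ → Set ℕ)
    (hA : ∀ k : ℕ, Summable (fun n : A k => h n)) :
    ∃ B : Set ℕ, Summable (fun n : B => h n) ∧ ∀ k : ℕ, (A k \ B).Finite := by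
  letI : NormedAddCommGroup G :=
    { (inferInstance : AddCommGroup G), (inferInstance : MetricSpace G) with
      norm := fun x => dist x 0
      dist_eq := fun a b => by
        have e : -a + b + a = b := by abel
        rw [dist_comm, ← hinv (-a + b) 0 a, e, zero_add] }
  exact aux_key h A hA
end

section
/- Let φ be a lower semicontinuous submeasure on ℕ. Then there exist an abelian topological group G which is a Polish space (i.e. G carries instances of AddCommGroup, a topology making it a topological additive group, and PolishSpace) and a function h : ℕ → G such that for every A ⊆ ℕ: A ∈ Exh(φ) if and only if ∑_{n∈A} h(n) converges unconditionally in G. (Every ideal of the form Exh(φ) is representable in a Polish abelian group.) -/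
open Filter Topology

/-- every ideal of the form `Exh(φ)` for an lsc submeasure `φ` is representable
in a Polish abelian group. -/
theorem stmt2 (φ : Set ℕ → ENNReal)
    (h0 : φ ∅ = 0)
    (hmono : ∀ A B : Set ℕ, A ⊆ B → φ A ≤ φ B)
    (hsub : ∀ A B : Set ℕ, φ (A ∪ B) ≤ φ A + φ B)
    (hsing : ∀ n : ℕ, φ {n} < ⊤)
    (hlsc : ∀ A : Set ℕ, φ A = ⨆ (F : Finset ℕ) (_ : ↑F ⊆ A), φ ↑F) :
    ∃ (G : Type) (_ : AddCommGroup G) (_ : TopologicalSpace G),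
      IsTopologicalAddGroup G ∧ PolishSpace G ∧
      ∃ h : ℕ → G, ∀ A : Set ℕ,
        Tendsto (fun N : ℕ => φ (A \ Set.Iio N)) atTop (𝓝 0) ↔
          Summable (fun n : A => h n) := by
  classical
  -- φ is finite on finite sets
  have hfin : ∀ F : Finset ℕ, φ ↑F < ⊤ := by
    intro F
    induction F using Finset.induction_on with
    | empty => simp [h0]
    | insert a s ha ih =>
      have h1 : φ ↑(insert a s) ≤ φ {a} + φ ↑s := by
        refine le_trans (hmono _ ({a} ∪ ↑s) ?_) (hsub _ _)
        rw [Finset.coe_insert, Set.insert_eq]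
      exact lt_of_le_of_lt h1 (ENNReal.add_lt_top.2 ⟨hsing a, ih⟩)
  -- the seminorm on finitely supported ZMod 2 valued functions
  let ν : AddGroupSeminorm (ℕ →₀ ZMod 2) :=
  { toFun := fun f => (φ ↑f.support).toReal
    map_zero' := by simp [h0]
    add_le' := by
      intro f g
      have h1 : φ ↑(f + g).support ≤ φ ↑f.support + φ ↑g.support := by
        refine le_trans (hmono _ (↑f.support ∪ ↑g.support) ?_) (hsub _ _)
        rw [← Finset.coe_union]
        exact_mod_cast Finsupp.support_add
      have h2 : φ ↑f.support + φ ↑g.support ≠ ⊤ :=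
        (ENNReal.add_lt_top.2 ⟨hfin _, hfin _⟩).ne
      calc (φ ↑(f + g).support).toReal ≤ (φ ↑f.support + φ ↑g.support).toReal :=
            ENNReal.toReal_mono h2 h1
        _ = (φ ↑f.support).toReal + (φ ↑g.support).toReal :=
            ENNReal.toReal_add (hfin _).ne (hfin _).ne
    neg' := by intro f; simp }
  letI : SeminormedAddCommGroup (ℕ →₀ ZMod 2) := ν.toSeminormedAddCommGroup
  have hnorm : ∀ f : ℕ →₀ ZMod 2, ‖f‖ = (φ ↑f.support).toReal := fun _ => rfl
  haveI : TopologicalSpace.SeparableSpace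
      (UniformSpace.Completion (ℕ →₀ ZMod 2)) :=
    UniformSpace.Completion.denseRange_coe.separableSpace
      (UniformSpace.Completion.continuous_coe _)
  refine ⟨UniformSpace.Completion (ℕ →₀ ZMod 2), inferInstance, inferInstance,
    inferInstance, inferInstance,
    fun n => UniformSpace.Completion.toCompl (Finsupp.single n 1), ?_⟩
  intro A
  -- support of a partial sum
  have hone : (1 : ZMod 2) ≠ 0 := by decide
  have hsupp : ∀ t : Finset A,
      (∑ n ∈ t, Finsupp.single (n : ℕ) (1 : ZMod 2)).support
        = t.image (fun n : A => (n : ℕ)) := by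
    intro t
    rw [Finsupp.support_sum_eq_biUnion]
    · ext m
      simp [Finsupp.support_single_ne_zero _ hone]
    · intro i j hij
      rw [Finsupp.support_single_ne_zero _ hone, Finsupp.support_single_ne_zero _ hone]
      simp only [Finset.disjoint_singleton]
      exact fun h => hij (Subtype.ext h)
  -- Summability in the completion is equivalent to the Cauchy property downstairs
  have step1 : Summable (fun n : A =>
        UniformSpace.Completion.toCompl (Finsupp.single (n : ℕ) (1 : ZMod 2))) ↔
      CauchySeq (fun s : Finset A => ∑ n ∈ s, Finsupp.single (n : ℕ) (1 : ZMod 2)) := by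
    rw [summable_iff_cauchySeq_finset]
    have e1 : (fun s : Finset A =>
          ∑ n ∈ s, UniformSpace.Completion.toCompl (Finsupp.single (n : ℕ) (1 : ZMod 2)))
        = (UniformSpace.Completion.toCompl) ∘
          (fun s : Finset A => ∑ n ∈ s, Finsupp.single (n : ℕ) (1 : ZMod 2)) := by
      funext s
      simp [Function.comp, map_sum]
    rw [e1]
    show Cauchy _ ↔ Cauchy _
    rw [← Filter.map_map]
    exact (UniformSpace.Completion.isUniformInducing_coe _).cauchy_map_iff
  rw [step1, cauchySeq_finset_iff_sum_vanishing]
  constructor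
  · -- Exh ⇒ vanishing
    intro htd e he
    obtain ⟨ε, εpos, hball⟩ := Metric.mem_nhds_iff.1 he
    obtain ⟨N, hN⟩ := (ENNReal.tendsto_atTop_zero.1 htd) (ENNReal.ofReal (ε / 2))
      (ENNReal.ofReal_pos.2 (half_pos εpos))
    refine ⟨(Finset.range N).preimage (fun n : A => (n : ℕ))
      Subtype.val_injective.injOn, ?_⟩
    intro t ht
    apply hball
    rw [Metric.mem_ball, dist_zero_right, hnorm, hsupp]
    have hsubset : ↑(t.image (fun n : A => (n : ℕ))) ⊆ A \ Set.Iio N := by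
      intro m hm
      simp only [Finset.coe_image, Set.mem_image, Finset.mem_coe] at hm
      obtain ⟨n, hnt, rfl⟩ := hm
      refine ⟨n.2, ?_⟩
      intro hlt
      exact (Finset.disjoint_left.1 ht hnt) (by simpa [Finset.mem_preimage] using hlt)
    have h1 : φ ↑(t.image (fun n : A => (n : ℕ))) ≤ ENNReal.ofReal (ε / 2) :=
      le_trans (hmono _ _ hsubset) (hN N le_rfl)
    calc (φ ↑(t.image (fun n : A => (n : ℕ)))).toReal
        ≤ (ENNReal.ofReal (ε / 2)).toReal := ENNReal.toReal_mono ENNReal.ofReal_ne_top h1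
      _ = ε / 2 := ENNReal.toReal_ofReal (le_of_lt (half_pos εpos))
      _ < ε := half_lt_self εpos
  · -- vanishing ⇒ Exh
    intro hv
    rw [ENNReal.tendsto_atTop_zero]
    intro ε hε
    set r : ℝ := if ε = ⊤ then 1 else ε.toReal with hr
    have hrpos : 0 < r := by
      rw [hr]
      split
      · exact one_pos
      · exact ENNReal.toReal_pos (ne_of_gt hε) (by assumption)
    obtain ⟨s, hs⟩ := hv (Metric.ball 0 r) (Metric.ball_mem_nhds _ hrpos)
    set S : Finset ℕ := s.image (fun n : A => (n : ℕ)) with hS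
    have hAS : φ (A \ ↑S) ≤ ε := by
      rw [hlsc (A \ ↑S)]
      refine iSup₂_le ?_
      intro F hF
      -- lift F to a finset of A
      set t : Finset A := F.preimage (fun n : A => (n : ℕ))
        Subtype.val_injective.injOn with htdef
      have himage : t.image (fun n : A => (n : ℕ)) = F := by
        ext m
        simp only [htdef, Finset.mem_image, Finset.mem_preimage]
        constructor
        · rintro ⟨n, hn, rfl⟩; exact hn
        · intro hm
          exact ⟨⟨m, (hF hm).1⟩, hm, rfl⟩
      have hdisj : Disjoint t s := by
        rw [Finset.disjoint_left]
        intro n hnt hns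
        have : (n : ℕ) ∈ S := Finset.mem_image_of_mem _ hns
        have hnF : (n : ℕ) ∈ F := by simpa [htdef, Finset.mem_preimage] using hnt
        exact (hF hnF).2 this
      have := hs t hdisj
      rw [Metric.mem_ball, dist_zero_right, hnorm, hsupp, himage] at this
      -- conclude φ ↑F ≤ ε
      by_cases hεtop : ε = ⊤
      · simp [hεtop]
      · have hrε : r = ε.toReal := by rw [hr, if_neg hεtop]
        rw [hrε] at this
        exact le_of_lt ((ENNReal.toReal_lt_toReal (hfin F).ne hεtop).1 this)
    refine ⟨S.sup Nat.succ, ?_⟩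
    intro n hn
    refine le_trans (hmono _ (A \ ↑S) ?_) hAS
    intro m hm
    refine ⟨hm.1, ?_⟩
    intro hmS
    have : m.succ ≤ S.sup Nat.succ := Finset.le_sup hmS
    exact hm.2 (lt_of_lt_of_le (Nat.lt_of_succ_le this) hn)
end

section
/- Let ℓ∞ denote the Banach space of bounded real sequences with the supremum norm (Mathlib's lp (fun _ : ℕ ↦ ℝ) ∞). Let h : ℕ → ℓ∞ and let h' : ℕ → ℓ∞ be defined coordinatewise by h'(n)(k) = |h(n)(k)|. Then for every A ⊆ ℕ: the series ∑_{n∈A} h(n) converges unconditionally in ℓ∞ if and only if ∑_{n∈A} h'(n) converges unconditionally in ℓ∞. -/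
open Filter Topology
open scoped ENNReal

/-- replacing each coordinate of a sequence in `ℓ∞` by its absolute value does
not change the sets on which the series converges unconditionally. -/
theorem stmt3 (h h' : ℕ → lp (fun _ : ℕ => ℝ) ∞)
    (hh' : ∀ n k : ℕ, (h' n : ℕ → ℝ) k = |(h n : ℕ → ℝ) k|) :
    ∀ A : Set ℕ, (Summable (fun n : A => h n) ↔ Summable (fun n : A => h' n)) := by
  classical
  have hface : Fact ((1:ℝ≥0∞) ≤ ∞) := ⟨le_top⟩
  intro A
  have coord : ∀ (t : Finset A) (f : ℕ → lp (fun _ : ℕ => ℝ) ∞) (k : ℕ),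
      ((∑ n ∈ t, f n : lp (fun _ : ℕ => ℝ) ∞) : ℕ → ℝ) k = ∑ n ∈ t, (f n : ℕ → ℝ) k := by
    intro t f k
    rw [lp.coeFn_sum]
    simp
  constructor
  · intro H
    rw [summable_iff_vanishing_norm] at H ⊢
    intro ε hε
    obtain ⟨s, hs⟩ := H (ε/3) (by linarith)
    refine ⟨s, fun t ht => ?_⟩
    have hle : ‖∑ n ∈ t, h' n‖ ≤ 2 * (ε/3) := by
      refine lp.norm_le_of_forall_le (by linarith) fun k => ?_
      rw [coord]
      have key : ∑ n ∈ t, (h' n : ℕ → ℝ) k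
          = ((∑ n ∈ t.filter (fun n : A => 0 ≤ (h (n:ℕ) : ℕ → ℝ) k), h n : lp _ ∞) : ℕ → ℝ) k
            - ((∑ n ∈ t.filter (fun n : A => ¬ 0 ≤ (h (n:ℕ) : ℕ → ℝ) k), h n : lp _ ∞) : ℕ → ℝ) k := by
        rw [coord, coord, ← Finset.sum_filter_add_sum_filter_not t (fun n : A => 0 ≤ (h (n:ℕ) : ℕ → ℝ) k)
          (fun n : A => (h' (n:ℕ) : ℕ → ℝ) k)]
        have h1 : ∑ n ∈ t.filter (fun n : A => 0 ≤ (h (n:ℕ) : ℕ → ℝ) k), (h' n : ℕ → ℝ) k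
            = ∑ n ∈ t.filter (fun n : A => 0 ≤ (h (n:ℕ) : ℕ → ℝ) k), (h n : ℕ → ℝ) k := by
          refine Finset.sum_congr rfl fun n hn => ?_
          rw [hh', abs_of_nonneg (Finset.mem_filter.1 hn).2]
        have h2 : ∑ n ∈ t.filter (fun n : A => ¬ 0 ≤ (h (n:ℕ) : ℕ → ℝ) k), (h' n : ℕ → ℝ) k
            = - ∑ n ∈ t.filter (fun n : A => ¬ 0 ≤ (h (n:ℕ) : ℕ → ℝ) k), (h n : ℕ → ℝ) k := by
          rw [← Finset.sum_neg_distrib]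
          refine Finset.sum_congr rfl fun n hn => ?_
          rw [hh', abs_of_neg (lt_of_not_ge (Finset.mem_filter.1 hn).2)]
        rw [h1, h2]; ring
      rw [Real.norm_eq_abs, key]
      have b1 : ‖((∑ n ∈ t.filter (fun n : A => 0 ≤ (h (n:ℕ) : ℕ → ℝ) k), h n : lp _ ∞) : ℕ → ℝ) k‖
          ≤ ε/3 := le_of_lt <| lt_of_le_of_lt
          (lp.norm_apply_le_norm ENNReal.top_ne_zero _ k)
          (hs _ (Finset.disjoint_of_subset_left (Finset.filter_subset _ _) ht))
      have b2 : ‖((∑ n ∈ t.filter (fun n : A => ¬ 0 ≤ (h (n:ℕ) : ℕ → ℝ) k), h n : lp _ ∞) : ℕ → ℝ) k‖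
          ≤ ε/3 := le_of_lt <| lt_of_le_of_lt
          (lp.norm_apply_le_norm ENNReal.top_ne_zero _ k)
          (hs _ (Finset.disjoint_of_subset_left (Finset.filter_subset _ _) ht))
      rw [Real.norm_eq_abs] at b1 b2
      calc |_ - _| ≤ |_| + |_| := abs_sub _ _
        _ ≤ ε/3 + ε/3 := add_le_add b1 b2
        _ = 2 * (ε/3) := by ring
    linarith
  · intro H
    rw [summable_iff_vanishing_norm] at H ⊢
    intro ε hε
    obtain ⟨s, hs⟩ := H ε hε
    refine ⟨s, fun t ht => ?_⟩
    refine lt_of_le_of_lt ?_ (hs t ht)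
    refine lp.norm_le_of_forall_le (norm_nonneg _) fun k => ?_
    rw [Real.norm_eq_abs, coord]
    calc |∑ n ∈ t, (h n : ℕ → ℝ) k| ≤ ∑ n ∈ t, |(h n : ℕ → ℝ) k| := Finset.abs_sum_le_sum_abs _ _
      _ = ∑ n ∈ t, (h' n : ℕ → ℝ) k := by simp [hh']
      _ = ((∑ n ∈ t, h' n : lp _ ∞) : ℕ → ℝ) k := (coord t h' k).symm
      _ ≤ ‖((∑ n ∈ t, h' n : lp _ ∞) : ℕ → ℝ) k‖ := le_abs_self _
      _ ≤ ‖∑ n ∈ t, h' n‖ := lp.norm_apply_le_norm ENNReal.top_ne_zero _ k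
end

section
/- Let m : ℕ → ℕ → [0,∞) be a family of nonnegative mass functions such that sup_{k∈ℕ} m(k)(n) < ∞ for every n ∈ ℕ, so that h(n) := (m(k)(n))_{k∈ℕ} defines an element of ℓ∞, the Banach space of bounded real sequences with the supremum norm (Mathlib's lp (fun _ : ℕ ↦ ℝ) ∞). Define φ : Set ℕ → [0,∞] by φ(A) = sup_{k∈ℕ} ∑_{n∈A} m(k)(n). Then for every A ⊆ ℕ: the series ∑_{n∈A} h(n) converges unconditionally in ℓ∞ if and only if A ∈ Exh(φ), i.e. φ(A \ [0,N)) → 0 as N → ∞. (Every non-pathological analytic P-ideal, i.e. every ideal Exh(sup of countably many measures), is representable in a Banach space.) -/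
open Filter Topology
open scoped ENNReal

/-- if `φ = sup` of countably many measures given by mass functions
`m k : ℕ → [0,∞)` (uniformly bounded at every point, so that
`h n = (m k n)_k` is an element of `ℓ∞`), then `∑_{n∈A} h n` converges unconditionally in
`ℓ∞` iff `A ∈ Exh(φ)`. -/
theorem stmt4 (m : ℕ → ℕ → ℝ) (hm : ∀ k n : ℕ, 0 ≤ m k n)
    (h : ℕ → lp (fun _ : ℕ => ℝ) ∞)
    (hh : ∀ n k : ℕ, (h n : ℕ → ℝ) k = m k n) :
    ∀ A : Set ℕ,
      Summable (fun n : A => h n) ↔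
        Tendsto
          (fun N : ℕ => ⨆ k : ℕ, ∑' n : ↥(A \ Set.Iio N), ENNReal.ofReal (m k ↑n))
          atTop (𝓝 0) := by
  classical
  intro A
  have hcoord : ∀ (t : Finset ↥A) (k : ℕ),
      ((∑ n ∈ t, h ↑n : lp (fun _ : ℕ => ℝ) ∞) : ℕ → ℝ) k = ∑ n ∈ t, m k ↑n := by
    intro t k
    rw [lp.coeFn_sum, Finset.sum_apply]
    exact Finset.sum_congr rfl fun n _ => hh n k
  constructor
  · intro hsum
    rw [ENNReal.tendsto_nhds_zero]
    intro ε hε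
    obtain ⟨δ', hδ'0, hδ'ε⟩ := exists_between hε
    have hδ'top : δ' ≠ ⊤ := (lt_of_lt_of_le hδ'ε le_top).ne
    set δ : ℝ := δ'.toReal with hδdef
    have hδ0 : 0 < δ := ENNReal.toReal_pos hδ'0.ne' hδ'top
    have hδε : ENNReal.ofReal δ ≤ ε := by
      rw [hδdef, ENNReal.ofReal_toReal hδ'top]; exact hδ'ε.le
    rcases summable_iff_vanishing_norm.1 hsum δ hδ0 with ⟨s, hs⟩
    set N₀ : ℕ := (s.image (fun x : ↥A => (x : ℕ))).sup id + 1 with hN₀def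
    filter_upwards [eventually_ge_atTop N₀] with N hN
    refine iSup_le fun k => le_trans ?_ hδε
    rw [ENNReal.tsum_eq_iSup_sum]
    refine iSup_le fun u => ?_
    set t : Finset ↥A := u.image (fun x : ↥(A \ Set.Iio N) => (⟨(x : ℕ), x.2.1⟩ : ↥A)) with htdef
    have hinj : ∀ x ∈ u, ∀ y ∈ u,
        (⟨(x : ℕ), x.2.1⟩ : ↥A) = (⟨(y : ℕ), y.2.1⟩ : ↥A) → x = y := by
      intro x _ y _ hxy
      have hv : (x : ℕ) = (y : ℕ) := by simpa using hxy
      exact Subtype.ext hv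
    have hsum_eq : ∑ n ∈ t, m k ↑n = ∑ x ∈ u, m k ↑x := Finset.sum_image hinj
    have hdisj : Disjoint t s := by
      rw [Finset.disjoint_left]
      intro x hx hxs
      rw [htdef, Finset.mem_image] at hx
      obtain ⟨y, _, rfl⟩ := hx
      have h1 : ¬ ((y : ℕ) < N) := y.2.2
      have h2 : (y : ℕ) ≤ (s.image (fun x : ↥A => (x : ℕ))).sup id :=
        Finset.le_sup (f := id) (Finset.mem_image_of_mem _ hxs)
      omega
    have hnorm : ‖∑ n ∈ t, h ↑n‖ < δ := hs t hdisj
    have hle : ∑ n ∈ t, m k ↑n ≤ δ := by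
      have h1 : ∑ n ∈ t, m k ↑n ≤ ‖∑ n ∈ t, h ↑n‖ := by
        have h0 := lp.norm_apply_le_norm (p := ∞) ENNReal.top_ne_zero (∑ n ∈ t, h ↑n) k
        rw [hcoord t k, Real.norm_eq_abs] at h0
        exact (le_abs_self _).trans h0
      linarith
    calc ∑ x ∈ u, ENNReal.ofReal (m k ↑x)
        = ENNReal.ofReal (∑ x ∈ u, m k ↑x) :=
          (ENNReal.ofReal_sum_of_nonneg (f := fun x : ↥(A \ Set.Iio N) => m k ↑x) (fun i _ => hm k ↑i)).symm
      _ ≤ ENNReal.ofReal δ := by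
          apply ENNReal.ofReal_le_ofReal
          rw [← hsum_eq]; exact hle
  · intro htend
    rw [summable_iff_vanishing_norm]
    intro ε hε
    have h2 : (0 : ℝ≥0∞) < ENNReal.ofReal (ε / 2) := ENNReal.ofReal_pos.2 (by linarith)
    obtain ⟨N, hN⟩ := (ENNReal.tendsto_nhds_zero.1 htend _ h2).exists
    refine ⟨(Finset.range N).subtype (· ∈ A), fun t ht => ?_⟩
    have hmem : ∀ x ∈ t, (x : ℕ) ∈ A \ Set.Iio N := by
      intro x hx
      refine ⟨x.2, fun hlt => ?_⟩
      exact (Finset.disjoint_left.1 ht hx)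
        (Finset.mem_subtype.2 (by simpa using Finset.mem_range.2 hlt))
    have key : ∀ k, ∑ n ∈ t, m k ↑n ≤ ε / 2 := by
      intro k
      have hofr : ENNReal.ofReal (∑ n ∈ t, m k ↑n) ≤ ENNReal.ofReal (ε / 2) := by
        have hinj : ∀ x ∈ t, ∀ y ∈ t, (x : ℕ) = (y : ℕ) → x = y :=
          fun x _ y _ hxy => Subtype.ext hxy
        calc ENNReal.ofReal (∑ n ∈ t, m k ↑n)
            = ∑ n ∈ t, ENNReal.ofReal (m k ↑n) :=
              ENNReal.ofReal_sum_of_nonneg (f := fun x : ↥A => m k ↑x) (fun i _ => hm k ↑i)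
          _ = ∑ n ∈ t.image (fun x : ↥A => (x : ℕ)), ENNReal.ofReal (m k n) :=
              (Finset.sum_image (f := fun n : ℕ => ENNReal.ofReal (m k n)) hinj).symm
          _ = ∑ n ∈ t.image (fun x : ↥A => (x : ℕ)),
                (A \ Set.Iio N).indicator (fun n => ENNReal.ofReal (m k n)) n := by
              refine Finset.sum_congr rfl fun n hn => ?_
              rw [Finset.mem_image] at hn
              obtain ⟨x, hx, rfl⟩ := hn
              exact (Set.indicator_of_mem (hmem x hx) (fun n => ENNReal.ofReal (m k n))).symm
          _ ≤ ∑' n, (A \ Set.Iio N).indicator (fun n => ENNReal.ofReal (m k n)) n :=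
              ENNReal.sum_le_tsum _
          _ = ∑' n : ↥(A \ Set.Iio N), ENNReal.ofReal (m k ↑n) := (tsum_subtype _ _).symm
          _ ≤ ⨆ k : ℕ, ∑' n : ↥(A \ Set.Iio N), ENNReal.ofReal (m k ↑n) :=
              le_iSup (fun k => ∑' n : ↥(A \ Set.Iio N), ENNReal.ofReal (m k ↑n)) k
          _ ≤ ENNReal.ofReal (ε / 2) := hN
      exact (ENNReal.ofReal_le_ofReal_iff (by linarith)).1 hofr
    have hnorm : ‖∑ n ∈ t, h ↑n‖ ≤ ε / 2 := by
      rw [lp.norm_eq_ciSup]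
      refine ciSup_le fun k => ?_
      rw [hcoord t k, Real.norm_of_nonneg (Finset.sum_nonneg (f := fun n : ↥A => m k ↑n) fun i _ => hm k ↑i)]
      exact key k
    linarith [hnorm]
end

section
/- Let X be a real Banach space and h : ℕ → X. Define φ̃ : Set ℕ → [0,∞] by φ̃(∅) = 0 and φ̃(A) = sup{ ‖∑_{n∈F} h(n)‖ : F a nonempty finite subset of A }. Then there exists a sequence (m_j)_{j∈ℕ} of finitely supported functions m_j : ℕ → [0,∞) such that the function ψ : Set ℕ → [0,∞] defined by ψ(A) = sup_{j∈ℕ} ∑_{n∈A} m_j(n) satisfies φ̃(A) ≤ ψ(A) ≤ 2·φ̃(A) for every A ⊆ ℕ; consequently, for every A ⊆ ℕ, the series ∑_{n∈A} h(n) converges unconditionally in X if and only if ψ(A \ [0,N)) → 0 as N → ∞. (Every ideal representable in a Banach space equals Exh(ψ) for a non-pathological lsc submeasure ψ.) -/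
open Filter Topology

section Aux

variable {X : Type*} [NormedAddCommGroup X] [NormedSpace ℝ X]

/-- A norming functional for `∑ n ∈ F, h n`. -/
noncomputable def stmt5aux (h : ℕ → X) (F : Finset ℕ) : X →L[ℝ] ℝ :=
  (exists_dual_vector'' ℝ (∑ n ∈ F, h n)).choose

lemma stmt5aux_norm (h : ℕ → X) (F : Finset ℕ) : ‖stmt5aux h F‖ ≤ 1 :=
  (exists_dual_vector'' ℝ (∑ n ∈ F, h n)).choose_spec.1

lemma stmt5aux_apply (h : ℕ → X) (F : Finset ℕ) :
    stmt5aux h F (∑ n ∈ F, h n) = ‖∑ n ∈ F, h n‖ := by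
  have := (exists_dual_vector'' ℝ (∑ n ∈ F, h n)).choose_spec.2
  exact_mod_cast this

lemma stmt5aux_abs_apply_le (h : ℕ → X) (F : Finset ℕ) (x : X) :
    |stmt5aux h F x| ≤ ‖x‖ := by
  calc |stmt5aux h F x| = ‖stmt5aux h F x‖ := (Real.norm_eq_abs _).symm
    _ ≤ ‖stmt5aux h F‖ * ‖x‖ := (stmt5aux h F).le_opNorm x
    _ ≤ 1 * ‖x‖ := by
        gcongr
        exact stmt5aux_norm h F
    _ = ‖x‖ := one_mul _

end Aux

/-- for a sequence `h` in a Banach space, the submeasure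
`φ(A) = sup { ‖∑_{n∈F} h n‖ : ∅ ≠ F ⊆ A finite }` is, up to a factor 2, the supremum `ψ` of
countably many finitely supported measures; consequently unconditional convergence of
`∑_{n∈A} h n` is equivalent to `A ∈ Exh(ψ)`. -/
theorem stmt5 {X : Type*} [NormedAddCommGroup X] [NormedSpace ℝ X] [CompleteSpace X]
    (h : ℕ → X) (φ : Set ℕ → ENNReal)
    (hφ : ∀ A : Set ℕ,
      φ A = ⨆ (F : Finset ℕ) (_ : F.Nonempty ∧ ↑F ⊆ A),
        ENNReal.ofReal ‖∑ n ∈ F, h n‖) :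
    ∃ m : ℕ → ℕ → ℝ,
      (∀ j n : ℕ, 0 ≤ m j n) ∧
      (∀ j : ℕ, (Function.support (m j)).Finite) ∧
      (∀ A : Set ℕ,
        φ A ≤ (⨆ j : ℕ, ∑' n : A, ENNReal.ofReal (m j ↑n)) ∧
        (⨆ j : ℕ, ∑' n : A, ENNReal.ofReal (m j ↑n)) ≤ 2 * φ A) ∧
      (∀ A : Set ℕ,
        Summable (fun n : A => h n) ↔
          Tendsto
            (fun N : ℕ => ⨆ j : ℕ, ∑' n : ↥(A \ Set.Iio N), ENNReal.ofReal (m j ↑n))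
            atTop (𝓝 0)) := by
  classical
  -- the finite set coded by `j`
  set Fj : ℕ → Finset ℕ := fun j => Denumerable.ofNat (Finset ℕ) j with hFj
  set m : ℕ → ℕ → ℝ := fun j n => if n ∈ Fj j then |stmt5aux h (Fj j) (h n)| else 0 with hm
  have hm_nonneg : ∀ j n : ℕ, 0 ≤ m j n := by
    intro j n
    simp only [hm]
    split <;> [exact abs_nonneg _; exact le_rfl]
  have hm_supp : ∀ j : ℕ, (Function.support (m j)).Finite := by
    intro j
    apply Set.Finite.subset (Fj j).finite_toSet
    intro n hn
    simp only [Function.mem_support, hm] at hn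
    by_cases hc : n ∈ Fj j
    · exact hc
    · simp [hc] at hn
  -- key: norm of a partial sum over a subset of A is ≤ φ A
  have hΦmem : ∀ (A : Set ℕ) (F : Finset ℕ), ↑F ⊆ A →
      ENNReal.ofReal ‖∑ n ∈ F, h n‖ ≤ φ A := by
    intro A F hFA
    rcases F.eq_empty_or_nonempty with rfl | hne
    · simp
    · rw [hφ]
      exact le_iSup₂ (f := fun F _ => ENNReal.ofReal ‖∑ n ∈ F, h n‖) F ⟨hne, hFA⟩
  -- tsum over A of m j equals a finite sum
  have htsum : ∀ (A : Set ℕ) (j : ℕ),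
      (∑' n : A, ENNReal.ofReal (m j ↑n)) =
        ∑ n ∈ (Fj j).filter (· ∈ A), ENNReal.ofReal (m j n) := by
    intro A j
    rw [tsum_subtype A (fun n => ENNReal.ofReal (m j n))]
    rw [tsum_eq_sum (s := Fj j) (by
      intro n hn
      have : m j n = 0 := by simp [hm, hn]
      simp [Set.indicator_apply, this])]
    rw [Finset.sum_filter]
    apply Finset.sum_congr rfl
    intro n _
    by_cases hnA : n ∈ A <;> simp [Set.indicator_apply, hnA]
  -- upper bound: each tsum ≤ 2 φ A
  have hupper : ∀ (A : Set ℕ) (j : ℕ),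
      (∑' n : A, ENNReal.ofReal (m j ↑n)) ≤ 2 * φ A := by
    intro A j
    rw [htsum A j]
    set S : Finset ℕ := (Fj j).filter (· ∈ A) with hS
    set g : X →L[ℝ] ℝ := stmt5aux h (Fj j) with hg
    have hSm : ∀ n ∈ S, m j n = |g (h n)| := by
      intro n hn
      rw [hS, Finset.mem_filter] at hn
      simp [hm, hn.1, hg]
    set P : Finset ℕ := S.filter (fun n => 0 ≤ g (h n)) with hP
    set Q : Finset ℕ := S.filter (fun n => ¬ 0 ≤ g (h n)) with hQ
    have hPA : ↑P ⊆ A := by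
      intro n hn
      simp only [hP, hS, Finset.coe_filter, Set.mem_setOf_eq, Finset.mem_filter] at hn
      exact hn.1.2
    have hQA : ↑Q ⊆ A := by
      intro n hn
      simp only [hQ, hS, Finset.coe_filter, Set.mem_setOf_eq, Finset.mem_filter] at hn
      exact hn.1.2
    have hsplit : ∑ n ∈ S, |g (h n)| = g (∑ n ∈ P, h n) - g (∑ n ∈ Q, h n) := by
      have e1 : ∑ n ∈ S, |g (h n)| = ∑ n ∈ P, g (h n) + ∑ n ∈ Q, -(g (h n)) := by
        rw [← Finset.sum_filter_add_sum_filter_not S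
          (fun n => 0 ≤ g (h n)) (fun n => |g (h n)|)]
        congr 1
        · exact Finset.sum_congr rfl fun n hn => abs_of_nonneg (Finset.mem_filter.mp hn).2
        · exact Finset.sum_congr rfl fun n hn =>
            abs_of_neg (lt_of_not_ge (Finset.mem_filter.mp hn).2)
      rw [e1, Finset.sum_neg_distrib, map_sum, map_sum]
      ring
    have hreal : ∑ n ∈ S, |g (h n)| ≤ ‖∑ n ∈ P, h n‖ + ‖∑ n ∈ Q, h n‖ := by
      rw [hsplit]
      have h1 : g (∑ n ∈ P, h n) ≤ ‖∑ n ∈ P, h n‖ :=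
        le_trans (le_abs_self _) (stmt5aux_abs_apply_le h (Fj j) _)
      have h2 : -g (∑ n ∈ Q, h n) ≤ ‖∑ n ∈ Q, h n‖ :=
        le_trans (neg_le_abs _) (stmt5aux_abs_apply_le h (Fj j) _)
      linarith
    calc ∑ n ∈ S, ENNReal.ofReal (m j n)
        = ENNReal.ofReal (∑ n ∈ S, |g (h n)|) := by
          rw [ENNReal.ofReal_sum_of_nonneg (fun n _ => abs_nonneg _)]
          exact Finset.sum_congr rfl fun n hn => by rw [hSm n hn]
      _ ≤ ENNReal.ofReal (‖∑ n ∈ P, h n‖ + ‖∑ n ∈ Q, h n‖) := ENNReal.ofReal_le_ofReal hreal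
      _ ≤ ENNReal.ofReal ‖∑ n ∈ P, h n‖ + ENNReal.ofReal ‖∑ n ∈ Q, h n‖ :=
          ENNReal.ofReal_add_le
      _ ≤ φ A + φ A := add_le_add (hΦmem A P hPA) (hΦmem A Q hQA)
      _ = 2 * φ A := (two_mul _).symm
  -- lower bound: φ A ≤ sup
  have hlower : ∀ A : Set ℕ, φ A ≤ ⨆ j : ℕ, ∑' n : A, ENNReal.ofReal (m j ↑n) := by
    intro A
    rw [hφ]
    apply iSup₂_le
    rintro F ⟨hne, hFA⟩
    set j : ℕ := @Encodable.encode (Finset ℕ) Denumerable.toEncodable F with hj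
    have hFjj : Fj j = F := by
      simp only [hFj, hj]
      exact Denumerable.ofNat_encode F
    have key : ENNReal.ofReal ‖∑ n ∈ F, h n‖ ≤ ∑' n : A, ENNReal.ofReal (m j ↑n) := by
      have h1 : ‖∑ n ∈ F, h n‖ ≤ ∑ n ∈ F, |stmt5aux h F (h n)| := by
        rw [← stmt5aux_apply h F, map_sum]
        exact le_trans (le_abs_self _) (Finset.abs_sum_le_sum_abs _ _)
      have h2 : ∀ n ∈ F, m j n = |stmt5aux h F (h n)| := by
        intro n hn
        simp [hm, hFjj, hn]
      calc ENNReal.ofReal ‖∑ n ∈ F, h n‖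
          ≤ ENNReal.ofReal (∑ n ∈ F, |stmt5aux h F (h n)|) := ENNReal.ofReal_le_ofReal h1
        _ = ∑ n ∈ F, ENNReal.ofReal (m j n) := by
            rw [ENNReal.ofReal_sum_of_nonneg (fun n _ => abs_nonneg _)]
            exact Finset.sum_congr rfl fun n hn => by rw [h2 n hn]
        _ = ∑ n ∈ F, Set.indicator A (fun n => ENNReal.ofReal (m j n)) n :=
            Finset.sum_congr rfl fun n hn => by
              rw [Set.indicator_of_mem (hFA hn)]
        _ ≤ ∑' n : ℕ, Set.indicator A (fun n => ENNReal.ofReal (m j n)) n :=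
            ENNReal.sum_le_tsum F
        _ = ∑' n : A, ENNReal.ofReal (m j ↑n) :=
            (tsum_subtype A (fun n => ENNReal.ofReal (m j n))).symm
    exact le_trans key (le_iSup (fun j => ∑' n : A, ENNReal.ofReal (m j ↑n)) j)
  refine ⟨m, hm_nonneg, hm_supp, fun A => ⟨hlower A, iSup_le (hupper A)⟩, ?_⟩
  -- the exhaustivity equivalence
  intro A
  have hmono : ∀ {B C : Set ℕ}, B ⊆ C → φ B ≤ φ C := by
    intro B C hBC
    rw [hφ, hφ]
    apply iSup₂_le
    rintro F ⟨hne, hFB⟩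
    exact le_iSup₂ (f := fun F _ => ENNReal.ofReal ‖∑ n ∈ F, h n‖) F
      ⟨hne, hFB.trans hBC⟩
  -- Summable ↔ Tendsto φ (A \ Iio N) → 0
  have hmain : Summable (fun n : A => h n) ↔
      Tendsto (fun N : ℕ => φ (A \ Set.Iio N)) atTop (𝓝 0) := by
    constructor
    · intro hs
      rw [ENNReal.tendsto_atTop_zero]
      intro ε hε
      set δ : ℝ := (min ε 1).toReal with hδ
      have hδpos : 0 < δ := by
        rw [hδ]
        apply ENNReal.toReal_pos
        · exact (lt_min hε (by norm_num)).ne'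
        · exact ne_top_of_le_ne_top (by norm_num) (min_le_right _ _)
      have hδle : ENNReal.ofReal δ ≤ ε := by
        rw [hδ, ENNReal.ofReal_toReal (ne_top_of_le_ne_top (by norm_num) (min_le_right _ _))]
        exact min_le_left _ _
      obtain ⟨s, hs'⟩ := summable_iff_vanishing_norm.mp hs δ hδpos
      set N : ℕ := (s.sup fun x => (x : ℕ)) + 1 with hN
      refine ⟨N, fun n hn => ?_⟩
      refine le_trans ?_ hδle
      rw [hφ]
      apply iSup₂_le
      rintro F ⟨hne, hFA⟩
      -- F ⊆ A \ Iio n ; build t : Finset ↥A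
      have hFA' : ∀ x ∈ F, x ∈ A := fun x hx => (hFA hx).1
      set t : Finset ↥A := F.subtype (· ∈ A) with ht
      have hsum : ∑ x ∈ t, h ↑x = ∑ x ∈ F, h x :=
        Finset.sum_subtype_of_mem _ hFA'
      have hdisj : Disjoint t s := by
        rw [Finset.disjoint_left]
        intro x hx hxs
        rw [ht, Finset.mem_subtype] at hx
        have h1 : (x : ℕ) ∈ A \ Set.Iio n := hFA hx
        have h2 : (x : ℕ) < N := Nat.lt_succ_of_le (Finset.le_sup (f := fun (y : ↥A) => (y : ℕ)) hxs)
        exact h1.2 (lt_of_lt_of_le h2 hn)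
      have := hs' t hdisj
      rw [hsum] at this
      exact ENNReal.ofReal_le_ofReal this.le
    · intro ht
      rw [summable_iff_vanishing_norm]
      intro ε hε
      obtain ⟨N, hN⟩ := (ENNReal.tendsto_atTop_zero.mp ht) (ENNReal.ofReal (ε / 2))
        (ENNReal.ofReal_pos.mpr (by linarith))
      have hN' : φ (A \ Set.Iio N) ≤ ENNReal.ofReal (ε / 2) := hN N le_rfl
      refine ⟨(Finset.range N).subtype (· ∈ A), fun t htd => ?_⟩
      set F : Finset ℕ := t.map (Function.Embedding.subtype _) with hF
      have hsum : ∑ x ∈ t, h ↑x = ∑ x ∈ F, h x := by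
        rw [hF, Finset.sum_map]
        rfl
      have hFsub : ↑F ⊆ A \ Set.Iio N := by
        intro x hx
        rw [hF, Finset.coe_map] at hx
        obtain ⟨y, hy, rfl⟩ := hx
        refine ⟨y.2, fun hlt => ?_⟩
        have : y ∈ (Finset.range N).subtype (· ∈ A) := by
          rw [Finset.mem_subtype]
          exact Finset.mem_range.mpr hlt
        exact (Finset.disjoint_left.mp htd hy) this
      have : ENNReal.ofReal ‖∑ x ∈ F, h x‖ ≤ ENNReal.ofReal (ε / 2) :=
        le_trans (hΦmem _ F hFsub) hN'
      rw [ENNReal.ofReal_le_ofReal_iff (by linarith)] at this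
      rw [hsum]
      linarith
  rw [hmain]
  -- squeeze between φ and 2 φ
  constructor
  · intro hφt
    have h2 : Tendsto (fun N : ℕ => 2 * φ (A \ Set.Iio N)) atTop (𝓝 0) := by
      have := ENNReal.Tendsto.const_mul hφt (Or.inr (by norm_num : (2:ENNReal) ≠ ⊤))
      simpa using this
    refine tendsto_of_tendsto_of_tendsto_of_le_of_le tendsto_const_nhds h2
      (fun N => zero_le) (fun N => ?_)
    exact iSup_le (hupper _)
  · intro hψt
    refine tendsto_of_tendsto_of_tendsto_of_le_of_le tendsto_const_nhds hψt
      (fun N => zero_le) (fun N => hlower _)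
end

section
/- Let J be an ideal on ℕ. Then there exist a real normed vector space X and a function h : ℕ → X such that for every A ⊆ ℕ: A ∈ J if and only if ∑_{n∈A} h(n) converges unconditionally in X. (Every ideal on ℕ is representable in a normed space.) -/
open Filter Topology

open scoped Classical
open BoundedContinuousFunction

noncomputable def uu (A : Set ℕ) : ℕ →ᵇ ℝ :=
  ofNormedAddCommGroupDiscrete (fun n => if n ∈ A then (1 : ℝ) / (n + 1) else 0) 1 (by
    intro n
    rw [Real.norm_eq_abs]
    beta_reduce
    split_ifs with h
    · rw [abs_of_nonneg (by positivity), div_le_one (by positivity)]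
      linarith [Nat.cast_nonneg (α := ℝ) n]
    · simp)

lemma uu_apply (A : Set ℕ) (n : ℕ) : uu A n = if n ∈ A then (1 : ℝ) / (n + 1) else 0 := rfl

lemma sum_uu_apply (A : Set ℕ) (F : Finset A) (m : ℕ) :
    (∑ n ∈ F, uu {(n : ℕ)}) m
      = if h : m ∈ A then (if ⟨m, h⟩ ∈ F then (1 : ℝ) / (m + 1) else 0) else 0 := by
  rw [BoundedContinuousFunction.coe_sum]
  simp only [Finset.sum_apply, uu_apply, Set.mem_singleton_iff]
  by_cases h : m ∈ A
  · rw [dif_pos h]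
    rw [show (fun n : A => if m = (n : ℕ) then (1:ℝ)/(m+1) else 0)
        = (fun n : A => if (⟨m, h⟩ : A) = n then (1:ℝ)/(m+1) else 0) from by
      funext n; congr 1; simp only [eq_iff_iff]; constructor
      · intro hm; exact Subtype.ext hm
      · intro hm; exact congrArg Subtype.val hm]
    rw [Finset.sum_ite_eq]
  · rw [dif_neg h]
    apply Finset.sum_eq_zero
    intro n _
    rw [if_neg]
    rintro rfl
    exact h n.2

lemma hasSum_uu (A : Set ℕ) : HasSum (fun n : A => uu {(n : ℕ)}) (uu A) := by
  rw [HasSum, SummationFilter.unconditional_filter, Metric.tendsto_atTop]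
  intro ε hε
  obtain ⟨N, hN⟩ := exists_nat_gt (1 / ε)
  refine ⟨(Finset.range (N + 1)).subtype (· ∈ A), fun F hF => ?_⟩
  have hNε : (1 : ℝ) / (N + 1) < ε := by
    rw [div_lt_iff₀ (by positivity)]
    rw [div_lt_iff₀ hε] at hN
    nlinarith
  rw [dist_eq_norm]
  refine lt_of_le_of_lt ?_ hNε
  rw [norm_le (by positivity)]
  intro m
  rw [BoundedContinuousFunction.coe_sub, Pi.sub_apply, sum_uu_apply, uu_apply]
  by_cases h : m ∈ A
  · rw [dif_pos h, if_pos h]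
    by_cases hmF : (⟨m, h⟩ : A) ∈ F
    · rw [if_pos hmF, sub_self, norm_zero]
      positivity
    · rw [if_neg hmF, zero_sub, norm_neg, Real.norm_eq_abs,
        abs_of_nonneg (by positivity)]
      have hm : N + 1 ≤ m := by
        by_contra hc
        exact hmF (hF (Finset.mem_subtype.mpr (Finset.mem_range.mpr (show m < N + 1 by omega))))
      apply div_le_div_of_nonneg_left (by norm_num) (by positivity)
      have : (N : ℝ) + 1 ≤ m := by exact_mod_cast le_trans (by norm_num) hm
      linarith
  · rw [dif_neg h, if_neg h, sub_self, norm_zero]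
    positivity

lemma mem_span_imp {J : Set (Set ℕ)}
    (hfin : ∀ A : Set ℕ, A.Finite → A ∈ J)
    (hdown : ∀ A B : Set ℕ, A ⊆ B → B ∈ J → A ∈ J)
    (hunion : ∀ A B : Set ℕ, A ∈ J → B ∈ J → A ∪ B ∈ J)
    {x : ℕ →ᵇ ℝ} (hx : x ∈ Submodule.span ℝ (uu '' J)) :
    ∃ C ∈ J, ∀ n ∉ C, x n = 0 := by
  induction hx using Submodule.span_induction with
  | mem x h =>
    obtain ⟨B, hB, rfl⟩ := h
    exact ⟨B, hB, fun n hn => by rw [uu_apply, if_neg hn]⟩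
  | zero => exact ⟨∅, hfin _ Set.finite_empty, fun n _ => rfl⟩
  | add x y hx hy ihx ihy =>
    obtain ⟨C, hC, hCx⟩ := ihx
    obtain ⟨D, hD, hDy⟩ := ihy
    exact ⟨C ∪ D, hunion _ _ hC hD, fun n hn => by
      simp only [BoundedContinuousFunction.coe_add, Pi.add_apply,
        hCx n (fun h => hn (Or.inl h)), hDy n (fun h => hn (Or.inr h)), add_zero]⟩
  | smul a x hx ihx =>
    obtain ⟨C, hC, hCx⟩ := ihx
    exact ⟨C, hC, fun n hn => by
      simp [BoundedContinuousFunction.coe_smul, hCx n hn]⟩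

/-- every ideal on ℕ is representable in a normed space. -/
theorem stmt6 (J : Set (Set ℕ))
    (hfin : ∀ A : Set ℕ, A.Finite → A ∈ J)
    (hdown : ∀ A B : Set ℕ, A ⊆ B → B ∈ J → A ∈ J)
    (hunion : ∀ A B : Set ℕ, A ∈ J → B ∈ J → A ∪ B ∈ J)
    (hproper : Set.univ ∉ J) :
    ∃ (X : Type) (_ : NormedAddCommGroup X) (_ : NormedSpace ℝ X) (h : ℕ → X),
      ∀ A : Set ℕ, A ∈ J ↔ Summable (fun n : A => h n) := by
  set M : Submodule ℝ (ℕ →ᵇ ℝ) := Submodule.span ℝ (uu '' J) with hM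
  refine ⟨M, inferInstance, inferInstance,
    fun n => ⟨uu {n}, Submodule.subset_span ⟨{n}, hfin _ (Set.finite_singleton n), rfl⟩⟩, ?_⟩
  intro A
  have hind : IsInducing (Subtype.val : M → ℕ →ᵇ ℝ) := IsInducing.subtypeVal
  have key : ∀ s : M, HasSum (fun n : A =>
      (⟨uu {(n : ℕ)}, Submodule.subset_span ⟨{(n : ℕ)}, hfin _ (Set.finite_singleton _), rfl⟩⟩ : M)) s
      ↔ HasSum (fun n : A => uu {(n : ℕ)}) (s : ℕ →ᵇ ℝ) := by
    intro s
    rw [HasSum, HasSum, hind.tendsto_nhds_iff]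
    have hcomp : (Subtype.val ∘ fun F : Finset A => ∑ n ∈ F,
        (⟨uu {(n : ℕ)}, Submodule.subset_span ⟨{(n : ℕ)}, hfin _ (Set.finite_singleton _), rfl⟩⟩ : M))
        = fun F : Finset A => ∑ n ∈ F, uu {(n : ℕ)} := by
      funext F
      simp [Function.comp, AddSubmonoidClass.coe_finset_sum]
    rw [hcomp]
  constructor
  · intro hA
    exact ⟨⟨uu A, Submodule.subset_span ⟨A, hA, rfl⟩⟩, (key _).mpr (hasSum_uu A)⟩
  · rintro ⟨s, hs⟩
    have h2 : HasSum (fun n : A => uu {(n : ℕ)}) (s : ℕ →ᵇ ℝ) := (key s).mp hs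
    have heq : (s : ℕ →ᵇ ℝ) = uu A := h2.unique (hasSum_uu A)
    have hmem : uu A ∈ M := heq ▸ s.2
    obtain ⟨C, hC, hCx⟩ := mem_span_imp hfin hdown hunion hmem
    refine hdown A C (fun n hn => ?_) hC
    by_contra hnC
    have := hCx n hnC
    rw [uu_apply, if_pos hn] at this
    exact absurd this (by positivity)
end

section
/- There exists a real normed vector space X whose dimension (Hamel dimension, i.e. Module.rank ℝ X) equals 2^𝔠, where 𝔠 = 2^ℵ₀ is the cardinality of the continuum, such that every ideal J on ℕ is representable in X: for every ideal J there is h : ℕ → X such that for every A ⊆ ℕ, A ∈ J if and only if ∑_{n∈A} h(n) converges unconditionally in X. -/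
open Filter Topology

noncomputable section Stmt7Aux

namespace Stmt7

open scoped ENNReal Classical

set_option maxHeartbeats 1000000
set_option synthInstance.maxHeartbeats 1000000

/-- Index of "slots": one copy of `ℕ` for every family of subsets of `ℕ`. -/
abbrev P : Type := Set (Set ℕ) × ℕ

/-- The small coordinate space `ℓ∞(ℕ)`. -/
abbrev E : Type := lp (fun _ : ℕ => ℝ) ∞

/-- The big ambient space `ℓ∞(P)`. -/
abbrev W : Type := lp (fun _ : P => ℝ) ∞

lemma memxf (A : Set ℕ) :
    Memℓp (fun n => if n ∈ A then (2⁻¹ : ℝ) ^ n else 0 : ∀ _ : ℕ, ℝ) ∞ := by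
  apply memℓp_infty
  refine ⟨1, ?_⟩
  rintro r ⟨n, rfl⟩
  simp only [Real.norm_eq_abs]
  by_cases h : n ∈ A
  · rw [if_pos h, abs_of_nonneg (by positivity)]
    exact pow_le_one₀ (by norm_num) (by norm_num)
  · simp [if_neg h]

/-- The vector in `ℓ∞(ℕ)` whose `n`-th coordinate is `2⁻ⁿ` for `n ∈ A` and `0` otherwise. -/
def x (A : Set ℕ) : E := ⟨fun n => if n ∈ A then (2⁻¹ : ℝ) ^ n else 0, memxf A⟩

lemma x_apply (A : Set ℕ) (m : ℕ) :
    (x A : ∀ _ : ℕ, ℝ) m = if m ∈ A then (2⁻¹ : ℝ) ^ m else 0 := rfl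

lemma memyf (J : Set (Set ℕ)) (A : Set ℕ) :
    Memℓp (fun q => if q.1 = J ∧ q.2 ∈ A then (2⁻¹ : ℝ) ^ q.2 else 0 : ∀ _ : P, ℝ) ∞ := by
  apply memℓp_infty
  refine ⟨1, ?_⟩
  rintro r ⟨q, rfl⟩
  simp only [Real.norm_eq_abs]
  by_cases h : q.1 = J ∧ q.2 ∈ A
  · rw [if_pos h, abs_of_nonneg (by positivity)]
    exact pow_le_one₀ (by norm_num) (by norm_num)
  · simp [if_neg h]

/-- The vector in `ℓ∞(P)` supported on the slot `J`, equal there to `x A`. -/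
def y (J : Set (Set ℕ)) (A : Set ℕ) : W :=
  ⟨fun q => if q.1 = J ∧ q.2 ∈ A then (2⁻¹ : ℝ) ^ q.2 else 0, memyf J A⟩

lemma y_apply (J : Set (Set ℕ)) (A : Set ℕ) (q : P) :
    (y J A : ∀ _ : P, ℝ) q = if q.1 = J ∧ q.2 ∈ A then (2⁻¹ : ℝ) ^ q.2 else 0 := rfl

/-- The basic unconditional convergence fact: `∑_{n ∈ A} y J {n} = y J A` in `ℓ∞(P)`. -/
lemma hasSum_y (J : Set (Set ℕ)) (A : Set ℕ) :
    HasSum (fun n : A => y J {(n : ℕ)}) (y J A) := by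
  rw [HasSum, SummationFilter.unconditional_filter, Metric.tendsto_atTop]
  intro ε hε
  obtain ⟨N, hN⟩ : ∃ N : ℕ, (2⁻¹ : ℝ) ^ N < ε := exists_pow_lt_of_lt_one hε (by norm_num)
  refine ⟨(Finset.range (N + 1)).subtype (· ∈ A), fun s hs => ?_⟩
  rw [dist_eq_norm]
  have coordbound : ∀ q : P,
      ‖((∑ n ∈ s, y J {(n : ℕ)} - y J A : W) : ∀ _ : P, ℝ) q‖ ≤ (2⁻¹ : ℝ) ^ (N + 1) := by
    intro q
    have hsumap : ((∑ n ∈ s, y J {(n : ℕ)} : W) : ∀ _ : P, ℝ) q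
        = ∑ n ∈ s, (if q.1 = J ∧ q.2 ∈ ({(n : ℕ)} : Set ℕ) then (2⁻¹ : ℝ) ^ q.2 else 0) := by
      rw [lp.coeFn_sum, Finset.sum_apply]
      exact Finset.sum_congr rfl fun c _ => by simp [y_apply]
    rw [lp.coeFn_sub, Pi.sub_apply, hsumap, y_apply]
    by_cases hqJ : q.1 = J
    · by_cases hmA : q.2 ∈ A
      · by_cases hms : ∃ n ∈ s, (n : ℕ) = q.2
        · obtain ⟨n, hns, hnm⟩ := hms
          have : ∑ n ∈ s, (if q.1 = J ∧ q.2 ∈ ({(n : ℕ)} : Set ℕ) then (2⁻¹ : ℝ) ^ q.2 else 0)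
              = (2⁻¹ : ℝ) ^ q.2 := by
            rw [Finset.sum_eq_single_of_mem n hns]
            · simp [hqJ, hnm.symm]
            · intro k hk hkn
              have : q.2 ≠ (k : ℕ) := by
                intro hmk
                exact hkn (Subtype.ext ((hnm.trans hmk).symm))
              simp [this]
          rw [this, if_pos ⟨hqJ, hmA⟩, sub_self, norm_zero]
          positivity
        · push_neg at hms
          have : ∑ n ∈ s, (if q.1 = J ∧ q.2 ∈ ({(n : ℕ)} : Set ℕ) then (2⁻¹ : ℝ) ^ q.2 else 0)
              = 0 := by
            apply Finset.sum_eq_zero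
            intro k hk
            have : q.2 ≠ (k : ℕ) := fun hmk => (hms k hk) hmk.symm
            simp [this]
          rw [this, if_pos ⟨hqJ, hmA⟩, zero_sub, norm_neg]
          have hmN : N + 1 ≤ q.2 := by
            by_contra hlt
            push_neg at hlt
            have hmem : (⟨q.2, hmA⟩ : A) ∈ (Finset.range (N + 1)).subtype (· ∈ A) := by
              simp [Finset.mem_subtype, Finset.mem_range, hlt]
            exact hms ⟨q.2, hmA⟩ (hs hmem) rfl
          rw [Real.norm_eq_abs, abs_of_nonneg (by positivity)]
          exact pow_le_pow_of_le_one (by norm_num) (by norm_num) hmN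
      · have : ∑ n ∈ s, (if q.1 = J ∧ q.2 ∈ ({(n : ℕ)} : Set ℕ) then (2⁻¹ : ℝ) ^ q.2 else 0)
            = 0 := by
          apply Finset.sum_eq_zero
          intro k hk
          have : q.2 ≠ (k : ℕ) := fun hmk => hmA (hmk ▸ (k : A).2)
          simp [this]
        rw [this, if_neg (fun hc => hmA hc.2), sub_self, norm_zero]
        positivity
    · have : ∑ n ∈ s, (if q.1 = J ∧ q.2 ∈ ({(n : ℕ)} : Set ℕ) then (2⁻¹ : ℝ) ^ q.2 else 0)
          = 0 := Finset.sum_eq_zero fun k hk => by simp [hqJ]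
      rw [this, if_neg (fun hc => hqJ hc.1), sub_self, norm_zero]
      positivity
  calc ‖∑ n ∈ s, y J {(n : ℕ)} - y J A‖ ≤ (2⁻¹ : ℝ) ^ (N + 1) :=
        lp.norm_le_of_forall_le (by positivity) coordbound
    _ < (2⁻¹ : ℝ) ^ N :=
        pow_lt_pow_right_of_lt_one₀ (by norm_num) (by norm_num) (Nat.lt_succ_self N)
    _ < ε := hN

/-- The generating set. -/
def S : Set W := {w | ∃ J : Set (Set ℕ), ∃ A ∈ J, w = y J A}

/-- Our normed space: the span of `S`. -/
def Xspan : Submodule ℝ W := Submodule.span ℝ S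

/-- Transferring a `HasSum` into a submodule. -/
lemma hasSum_in_submodule {ι : Type*} (p : Submodule ℝ W) (f : ι → W) (a : W)
    (hf : ∀ i, f i ∈ p) (ha : a ∈ p) (h : HasSum f a) :
    HasSum (fun i => (⟨f i, hf i⟩ : p)) (⟨a, ha⟩ : p) := by
  rw [HasSum, tendsto_subtype_rng]
  have : (fun s : Finset ι => ((∑ i ∈ s, (⟨f i, hf i⟩ : p) : p) : W))
      = fun s : Finset ι => ∑ i ∈ s, f i := by
    funext s
    push_cast
    rfl
  rw [this]
  exact h

/-- Evaluation of the slot `J` as a linear map to `ℓ∞(ℕ)`. -/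
def ev (J : Set (Set ℕ)) : W →ₗ[ℝ] E where
  toFun w := ⟨fun n => w (J, n), by
    apply memℓp_infty
    refine ⟨‖w‖, ?_⟩
    rintro r ⟨n, rfl⟩
    exact lp.norm_apply_le_norm ENNReal.top_ne_zero w (J, n)⟩
  map_add' a b := by
    apply lp.ext
    funext n
    have := congrFun (lp.coeFn_add a b) (J, n)
    exact this
  map_smul' c a := by
    apply lp.ext
    funext n
    have := congrFun (lp.coeFn_smul c a) (J, n)
    simpa [lp.coeFn_smul] using this

lemma ev_apply (J : Set (Set ℕ)) (w : W) (n : ℕ) :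
    ((ev J w : E) : ∀ _ : ℕ, ℝ) n = w (J, n) := rfl

lemma ev_y_self (J : Set (Set ℕ)) (A : Set ℕ) : ev J (y J A) = x A := by
  apply lp.ext
  funext n
  rw [ev_apply, y_apply, x_apply]
  simp

lemma ev_y_ne {J J' : Set (Set ℕ)} (h : J' ≠ J) (A : Set ℕ) : ev J (y J' A) = 0 := by
  apply lp.ext
  funext n
  rw [ev_apply, y_apply, if_neg (fun hc => h hc.1.symm)]
  simp

lemma x_mem_span {J : Set (Set ℕ)} {A : Set ℕ} (h : y J A ∈ Xspan) :
    x A ∈ Submodule.span ℝ (x '' J) := by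
  have h1 : ev J (y J A) ∈ Submodule.map (ev J) Xspan :=
    Submodule.mem_map_of_mem h
  rw [Xspan, Submodule.map_span] at h1
  have h2 : (ev J) '' S ⊆ insert 0 (x '' J) := by
    rintro _ ⟨w, ⟨J', A', hA', rfl⟩, rfl⟩
    by_cases hJ : J' = J
    · subst hJ
      rw [ev_y_self]
      exact Set.mem_insert_iff.2 (Or.inr ⟨A', hA', rfl⟩)
    · rw [ev_y_ne hJ]
      exact Set.mem_insert 0 _
  have h3 := Submodule.span_mono h2 h1
  rw [Submodule.span_insert_zero] at h3
  rwa [ev_y_self] at h3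

lemma biUnion_mem {J : Set (Set ℕ)} (hfin : ∀ A : Set ℕ, A.Finite → A ∈ J)
    (hun : ∀ A B : Set ℕ, A ∈ J → B ∈ J → A ∪ B ∈ J)
    {ι : Type*} (s : Finset ι) (B : ι → Set ℕ) (hB : ∀ i ∈ s, B i ∈ J) :
    (⋃ i ∈ s, B i) ∈ J := by
  classical
  induction s using Finset.induction_on with
  | empty => simpa using hfin ∅ Set.finite_empty
  | @insert a t ha ih =>
      rw [Finset.set_biUnion_insert]
      exact hun _ _ (hB a (Finset.mem_insert_self a t))
        (ih fun i hi => hB i (Finset.mem_insert_of_mem hi))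

/-- Injection of all families into families containing `univ`. -/
def φ (K : Set (Set ℕ)) : Set (Set ℕ) := (Set.image Nat.succ '' K) ∪ {Set.univ}

lemma univ_mem_φ (K : Set (Set ℕ)) : Set.univ ∈ φ K := Set.mem_union_right _ rfl

lemma succ_image_ne_univ (B : Set ℕ) : Set.image Nat.succ B ≠ Set.univ := by
  intro h
  have : (0 : ℕ) ∈ Set.image Nat.succ B := h ▸ Set.mem_univ 0
  obtain ⟨b, _, hb⟩ := this
  exact Nat.succ_ne_zero b hb

lemma φ_injective : Function.Injective φ := by
  intro K₁ K₂ h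
  have key : Set.image Nat.succ '' K₁ = Set.image Nat.succ '' K₂ := by
    ext B
    constructor
    · intro hB
      have : B ∈ φ K₂ := h ▸ Set.mem_union_left _ hB
      rcases this with hB' | hB'
      · exact hB'
      · obtain ⟨C, _, hC⟩ := hB
        exact absurd (hC.trans hB') (succ_image_ne_univ C)
    · intro hB
      have : B ∈ φ K₁ := h ▸ Set.mem_union_left _ hB
      rcases this with hB' | hB'
      · exact hB'
      · obtain ⟨C, _, hC⟩ := hB
        exact absurd (hC.trans hB') (succ_image_ne_univ C)
  exact (Set.image_injective.2 (Set.image_injective.2 Nat.succ_injective)) key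

lemma y_φ_mem_span (K : Set (Set ℕ)) : y (φ K) Set.univ ∈ Xspan :=
  Submodule.subset_span ⟨φ K, Set.univ, univ_mem_φ K, rfl⟩

lemma li_ambient : LinearIndependent ℝ (fun K : Set (Set ℕ) => y (φ K) Set.univ) := by
  rw [linearIndependent_iff']
  intro s g hsum K hK
  have h0 := congrFun (congrArg (fun v : W => (v : ∀ _ : P, ℝ)) hsum) (φ K, 0)
  simp only [lp.coeFn_sum, Finset.sum_apply, lp.coeFn_zero, Pi.zero_apply] at h0
  have hterm : ∀ K' ∈ s, ((g K' • y (φ K') Set.univ : W) : ∀ _ : P, ℝ) (φ K, 0)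
      = if K' = K then g K else 0 := by
    intro K' _
    rw [lp.coeFn_smul, Pi.smul_apply, y_apply]
    by_cases hKK : K' = K
    · subst hKK
      simp
    · rw [if_neg, smul_zero, if_neg hKK]
      exact fun hc => hKK (φ_injective hc.1).symm
  rw [Finset.sum_congr rfl hterm, Finset.sum_ite_eq' s K (fun _ => g K), if_pos hK] at h0
  exact h0

lemma mk_I : (Cardinal.mk (Set (Set ℕ))) = 2 ^ Cardinal.continuum := by
  rw [Cardinal.mk_set, Cardinal.mk_set, Cardinal.mk_nat, Cardinal.two_power_aleph0]

lemma rank_Xspan : Module.rank ℝ ↥Xspan = 2 ^ Cardinal.continuum := by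
  refine le_antisymm ?_ ?_
  · refine le_trans (rank_span_le S) ?_
    have hsub : S ⊆ Set.range (fun p : Set (Set ℕ) × Set ℕ => y p.1 p.2) := by
      rintro _ ⟨J, A, _, rfl⟩
      exact ⟨(J, A), rfl⟩
    calc (Cardinal.mk S)
        ≤ Cardinal.mk (Set.range (fun p : Set (Set ℕ) × Set ℕ => y p.1 p.2)) :=
          Cardinal.mk_le_mk_of_subset hsub
      _ ≤ Cardinal.mk (Set (Set ℕ) × Set ℕ) := Cardinal.mk_range_le
      _ = 2 ^ Cardinal.continuum * Cardinal.continuum := by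
          rw [Cardinal.mk_prod, Cardinal.lift_id, Cardinal.lift_id, mk_I,
            Cardinal.mk_set, Cardinal.mk_nat, Cardinal.two_power_aleph0]
      _ = 2 ^ Cardinal.continuum := by
          rw [Cardinal.mul_eq_max (le_trans Cardinal.aleph0_le_continuum
              (Cardinal.cantor Cardinal.continuum).le) Cardinal.aleph0_le_continuum]
          exact max_eq_left (Cardinal.cantor Cardinal.continuum).le
  · have li : LinearIndependent ℝ
        (fun K : Set (Set ℕ) => (⟨y (φ K) Set.univ, y_φ_mem_span K⟩ : ↥Xspan)) := by
      apply LinearIndependent.of_comp Xspan.subtype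
      exact li_ambient
    have := li.cardinal_le_rank
    rwa [mk_I] at this

end Stmt7

end Stmt7Aux

set_option maxHeartbeats 1000000 in
set_option synthInstance.maxHeartbeats 1000000 in
open Stmt7 in
/-- there is a normed space of Hamel dimension `2 ^ 𝔠` in which every ideal on
ℕ is representable. -/
theorem stmt7 :
    ∃ (X : Type) (_ : NormedAddCommGroup X) (_ : NormedSpace ℝ X),
      Module.rank ℝ X = 2 ^ Cardinal.continuum ∧
      ∀ J : Set (Set ℕ),
        (∀ A : Set ℕ, A.Finite → A ∈ J) →
        (∀ A B : Set ℕ, A ⊆ B → B ∈ J → A ∈ J) →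
        (∀ A B : Set ℕ, A ∈ J → B ∈ J → A ∪ B ∈ J) →
        Set.univ ∉ J →
        ∃ h : ℕ → X, ∀ A : Set ℕ, A ∈ J ↔ Summable (fun n : A => h n) := by
  classical
  refine ⟨↥Xspan, inferInstance, inferInstance, rank_Xspan, ?_⟩
  intro J hfin hdown hun _
  have hmem : ∀ n : ℕ, y J {n} ∈ Xspan :=
    fun n => Submodule.subset_span ⟨J, {n}, hfin {n} (Set.finite_singleton n), rfl⟩
  refine ⟨fun n => ⟨y J {n}, hmem n⟩, fun A => ⟨fun hA => ?_, fun hA => ?_⟩⟩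
  · -- A ∈ J → summable
    exact ⟨⟨y J A, Submodule.subset_span ⟨J, A, hA, rfl⟩⟩,
      hasSum_in_submodule Xspan _ _ (fun n : A => hmem (n : ℕ))
        (Submodule.subset_span ⟨J, A, hA, rfl⟩) (hasSum_y J A)⟩
  · -- summable → A ∈ J
    by_contra hAJ
    obtain ⟨t, ht⟩ := hA
    have h1 : HasSum (fun n : A => y J {(n : ℕ)}) (t : W) := Xspan.subtypeL.hasSum ht
    have heq : y J A = (t : W) := (hasSum_y J A).unique h1
    have hmemA : y J A ∈ Xspan := heq ▸ t.2
    have hx : x A ∈ Submodule.span ℝ (x '' J) := x_mem_span hmemA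
    rw [Submodule.mem_span_set'] at hx
    obtain ⟨n, f, g, hg⟩ := hx
    have hgm : ∀ i : Fin n, ∃ B ∈ J, x B = (g i : E) := fun i => (g i).2
    choose B hBJ hBx using hgm
    have hU : (⋃ i ∈ (Finset.univ : Finset (Fin n)), B i) ∈ J :=
      biUnion_mem hfin hun Finset.univ B (fun i _ => hBJ i)
    have hnotsub : ¬ A ⊆ ⋃ i ∈ (Finset.univ : Finset (Fin n)), B i :=
      fun hsub => hAJ (hdown _ _ hsub hU)
    obtain ⟨m, hmA, hmU⟩ := Set.not_subset.1 hnotsub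
    have hev : ((∑ i : Fin n, f i • (g i : E) : E) : ∀ _ : ℕ, ℝ) m
        = ((x A : E) : ∀ _ : ℕ, ℝ) m :=
      congrFun (congrArg (fun v : E => (v : ∀ _ : ℕ, ℝ)) hg) m
    have hzero : ((∑ i : Fin n, f i • (g i : E) : E) : ∀ _ : ℕ, ℝ) m = 0 := by
      rw [lp.coeFn_sum, Finset.sum_apply]
      apply Finset.sum_eq_zero
      intro i _
      rw [lp.coeFn_smul, Pi.smul_apply, ← hBx i, x_apply]
      have : m ∉ B i := fun hc => hmU (Set.mem_biUnion (Finset.mem_univ i) hc)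
      rw [if_neg this, smul_zero]
    rw [hzero, x_apply, if_pos hmA] at hev
    exact absurd hev.symm (by positivity)
end

section
/- The trace of the null ideal is summable-like; precisely, for the lsc submeasure φ_N on List Bool defined below, there exists ε > 0 such that for every δ > 0 there exist a sequence (A_n)_{n∈ℕ} of pairwise disjoint finite subsets of List Bool with φ_N(A_n) < δ for every n, and a k ∈ ℕ such that for every Y ⊆ ℕ with |Y| = k one has φ_N(⋃_{n∈Y} A_n) ≥ ε. -/
open Filter Topology

namespace Stmt8Aux

/-- All binary lists of length `m`, as a `Finset`. -/
def allL (m : ℕ) : Finset (List Bool) := (Finset.univ : Finset (Fin m → Bool)).image List.ofFn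

lemma mem_allL {m : ℕ} {s : List Bool} : s ∈ allL m ↔ s.length = m := by
  simp only [allL, Finset.mem_image, Finset.mem_univ, true_and]
  constructor
  · rintro ⟨f, rfl⟩; simp
  · rintro rfl; exact ⟨fun i => s.get i, by simp⟩

lemma card_allL (m : ℕ) : (allL m).card = 2 ^ m := by
  rw [allL, Finset.card_image_of_injective _ List.ofFn_injective]; simp

/-- The `n`-th of the disjoint sets: lists of length `L*(n+1)` ending in `L` zeros. -/
def An (L n : ℕ) : Finset (List Bool) := (allL (L * n)).image (· ++ List.replicate L false)

lemma mem_An {L n : ℕ} {s : List Bool} :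
    s ∈ An L n ↔ ∃ l : List Bool, l.length = L * n ∧ s = l ++ List.replicate L false := by
  simp only [An, Finset.mem_image, mem_allL]
  aesop

lemma length_of_mem_An {L n : ℕ} {s : List Bool} (h : s ∈ An L n) : s.length = L * (n + 1) := by
  obtain ⟨l, hl, rfl⟩ := mem_An.mp h
  simp [hl, Nat.mul_add]

lemma card_An (L n : ℕ) : (An L n).card = 2 ^ (L * n) := by
  rw [An, Finset.card_image_of_injective _ (fun a b h => by simpa using h), card_allL]

/-- Block `p` (of size `L`) of the list `l` is all-zero. -/
def Bz (L p : ℕ) (l : List Bool) : Prop := (l.drop (L * p)).take L = List.replicate L false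

instance (L p : ℕ) : DecidablePred (Bz L p) := fun l => by unfold Bz; infer_instance

lemma Bz.reconstruct {L p : ℕ} {l : List Bool} (h : Bz L p l) :
    l = l.take (L * p) ++ List.replicate L false ++ l.drop (L * p + L) := by
  conv_lhs => rw [← List.take_append_drop (L * p) l]
  rw [List.append_assoc]
  congr 1
  conv_lhs => rw [← List.take_append_drop L (l.drop (L * p))]
  rw [h, List.drop_drop]

lemma card_filter_Bz_le {L p M : ℕ} (h : L * p + L ≤ M) :
    ((allL M).filter (Bz L p)).card ≤ 2 ^ (M - L) := by
  rw [← card_allL (M - L)]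
  apply Finset.card_le_card_of_injOn (fun l => l.take (L * p) ++ l.drop (L * p + L))
  · intro l hl
    simp only [Finset.mem_coe, Finset.mem_filter, mem_allL] at hl ⊢
    rw [List.length_append, List.length_take, List.length_drop, hl.1]
    omega
  · intro a ha b hb hab
    simp only [Finset.coe_filter, Set.mem_setOf_eq, mem_allL] at ha hb
    simp only at hab
    have la : (a.take (L * p)).length = L * p := by rw [List.length_take]; omega
    have lb : (b.take (L * p)).length = L * p := by rw [List.length_take]; omega
    have e1 : a.take (L * p) = b.take (L * p) := by
      have h1 := congrArg (List.take (L * p)) hab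
      rwa [List.take_append_of_le_length la.ge, List.take_append_of_le_length lb.ge,
        List.take_take, Nat.min_self, List.take_take, Nat.min_self] at h1
    have e2 : a.drop (L * p + L) = b.drop (L * p + L) := by
      have h2 := congrArg (List.drop (L * p)) hab
      rwa [List.drop_append_of_le_length la.ge, List.drop_append_of_le_length lb.ge,
        List.drop_eq_nil_of_le la.le, List.drop_eq_nil_of_le lb.le,
        List.nil_append, List.nil_append] at h2
    rw [Bz.reconstruct ha.2, Bz.reconstruct hb.2, e1, e2]

variable {k : ℕ}

/-- Pieces of the antichain witnessing the lower bound on `φ` of the union. -/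
def BjF (L : ℕ) (ν : Fin k → ℕ) (j : Fin k) : Finset (List Bool) :=
  ((allL (L * ν j)).filter (fun l => ∀ i, i < j → ¬ Bz L (ν i) l)).image
    (· ++ List.replicate L false)

lemma mem_BjF {L : ℕ} {ν : Fin k → ℕ} {j : Fin k} {s : List Bool} :
    s ∈ BjF L ν j ↔ ∃ l : List Bool, l.length = L * ν j ∧ (∀ i, i < j → ¬ Bz L (ν i) l) ∧
      s = l ++ List.replicate L false := by
  simp only [BjF, Finset.mem_image, Finset.mem_filter, mem_allL]
  aesop

lemma card_BjF {L : ℕ} {ν : Fin k → ℕ} (hν : StrictMono ν) (j : Fin k) :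
    2 ^ (L * ν j) ≤ (BjF L ν j).card + (j : ℕ) * 2 ^ (L * ν j - L) := by
  set M := L * ν j with hM
  have hcard : (BjF L ν j).card
      = ((allL M).filter (fun l => ∀ i, i < j → ¬ Bz L (ν i) l)).card := by
    apply Finset.card_image_of_injective
    intro a b h; simpa using h
  have hsplit := Finset.card_filter_add_card_filter_not
    (s := allL M) (p := fun l => ∀ i, i < j → ¬ Bz L (ν i) l)
  have hbad : ((allL M).filter (fun l => ¬ ∀ i, i < j → ¬ Bz L (ν i) l)).card
      ≤ (j : ℕ) * 2 ^ (M - L) := by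
    have hsub : (allL M).filter (fun l => ¬ ∀ i, i < j → ¬ Bz L (ν i) l)
        ⊆ (Finset.Iio j).biUnion (fun i => (allL M).filter (Bz L (ν i))) := by
      intro l hl
      simp only [Finset.mem_filter, not_forall, not_not] at hl
      obtain ⟨hm, i, hij, hbz⟩ := hl
      exact Finset.mem_biUnion.mpr ⟨i, Finset.mem_Iio.mpr hij, Finset.mem_filter.mpr ⟨hm, hbz⟩⟩
    calc _ ≤ ((Finset.Iio j).biUnion (fun i => (allL M).filter (Bz L (ν i)))).card :=
            Finset.card_le_card hsub
      _ ≤ ∑ i ∈ Finset.Iio j, ((allL M).filter (Bz L (ν i))).card := Finset.card_biUnion_le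
      _ ≤ ∑ _i ∈ Finset.Iio j, 2 ^ (M - L) := by
            apply Finset.sum_le_sum
            intro i hi
            apply card_filter_Bz_le
            have : ν i < ν j := hν (Finset.mem_Iio.mp hi)
            calc L * ν i + L = L * (ν i + 1) := by ring
              _ ≤ L * ν j := Nat.mul_le_mul_left L this
      _ = (j : ℕ) * 2 ^ (M - L) := by rw [Finset.sum_const, Fin.card_Iio, smul_eq_mul]
  calc 2 ^ M = (allL M).card := (card_allL M).symm
    _ = _ + _ := hsplit.symm
    _ ≤ (BjF L ν j).card + (j : ℕ) * 2 ^ (M - L) := by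
        rw [hcard]; exact Nat.add_le_add_left hbad _

lemma antichain_aux {L : ℕ} {ν : Fin k → ℕ} (hν : StrictMono ν) {i j : Fin k}
    {l l' : List Bool} (hli : l.length = L * ν i) (hlj : l'.length = L * ν j)
    (hgood : ∀ i', i' < j → ¬ Bz L (ν i') l')
    (hne : l ++ List.replicate L false ≠ l' ++ List.replicate L false)
    (hpre : (l ++ List.replicate L false) <+: (l' ++ List.replicate L false)) : False := by
  set s := l ++ List.replicate L false with hs
  set t := l' ++ List.replicate L false with ht
  have hslen : s.length = L * ν i + L := by simp [hs, hli]
  have htlen : t.length = L * ν j + L := by simp [ht, hlj]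
  have hlt : s.length < t.length := by
    rcases lt_or_eq_of_le hpre.length_le with h | h
    · exact h
    · exact absurd (List.IsPrefix.eq_of_length hpre h) hne
  have hij : i < j := by
    have : ν i < ν j := by
      by_contra hc
      push_neg at hc
      have := Nat.mul_le_mul_left L hc
      omega
    exact hν.lt_iff_lt.mp this
  have hνij : ν i < ν j := hν hij
  have hBzt : Bz L (ν i) l' := by
    obtain ⟨r, hr⟩ := hpre
    have h1 : t.drop (L * ν i) = List.replicate L false ++ r := by
      rw [← hr, hs, List.append_assoc, List.drop_append_of_le_length (le_of_eq hli.symm),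
        List.drop_eq_nil_of_le (le_of_eq hli), List.nil_append]
    have h2 : t.drop (L * ν i) = l'.drop (L * ν i) ++ List.replicate L false := by
      rw [ht, List.drop_append_of_le_length]
      rw [hlj]
      exact Nat.mul_le_mul_left L hνij.le
    unfold Bz
    have hlen' : L ≤ (l'.drop (L * ν i)).length := by
      rw [List.length_drop, hlj]
      calc L = L * 1 := (mul_one L).symm
        _ ≤ L * (ν j - ν i) := Nat.mul_le_mul_left L (by omega)
        _ = L * ν j - L * ν i := by rw [Nat.mul_sub]
    rw [← List.take_append_of_le_length hlen', ← h2, h1,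
      List.take_append_of_le_length (by simp), List.take_replicate, Nat.min_self]
  exact hgood i hij hBzt

lemma pw (m : ℕ) : (2 : ENNReal) ^ (-(m : ℤ)) = 2⁻¹ ^ m := by
  rw [ENNReal.zpow_neg, zpow_natCast, ← ENNReal.inv_pow]

lemma two_mul_inv_pow (m : ℕ) : (2 : ENNReal) ^ m * 2⁻¹ ^ m = 1 := by
  rw [← mul_pow, ENNReal.mul_inv_cancel two_ne_zero (by norm_num), one_pow]

end Stmt8Aux

open Stmt8Aux in
/-- the submeasure `φ_N` defining the trace of the null ideal (on `2^{<ω}`,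
identified with `List Bool`) is summable-like. -/
theorem stmt8 (φ : Set (List Bool) → ENNReal)
    (hφ : ∀ A : Set (List Bool),
      φ A = ⨆ (B : Finset (List Bool))
        (_ : ↑B ⊆ A ∧ ∀ s ∈ B, ∀ t ∈ B, s ≠ t → ¬ s <+: t),
        ∑ s ∈ B, (2 : ENNReal) ^ (-(s.length : ℤ))) :
    ∃ ε : ENNReal, 0 < ε ∧
      ∀ δ : ENNReal, 0 < δ →
        ∃ A : ℕ → Finset (List Bool),
          (∀ n m : ℕ, n ≠ m → Disjoint (A n) (A m)) ∧
          (∀ n : ℕ, φ ↑(A n) < δ) ∧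
          ∃ k : ℕ, ∀ Y : Finset ℕ, Y.card = k → ε ≤ φ (⋃ n ∈ Y, ↑(A n)) := by
  refine ⟨2⁻¹ * 2⁻¹, ENNReal.mul_pos (by simp) (by simp), fun δ hδ => ?_⟩
  obtain ⟨N, hN⟩ := ENNReal.exists_inv_two_pow_lt hδ.ne'
  set L : ℕ := N + 1 with hL
  have hxL : (2⁻¹ : ENNReal) ^ L < δ := by
    calc (2⁻¹ : ENNReal) ^ L = 2⁻¹ ^ N * 2⁻¹ := by rw [hL, pow_succ]
      _ ≤ 2⁻¹ ^ N * 1 := by gcongr; norm_num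
      _ = 2⁻¹ ^ N := mul_one _
      _ < δ := hN
  refine ⟨An L, ?_, ?_, ?_⟩
  · -- disjointness
    intro n m hnm
    rw [Finset.disjoint_left]
    intro s hsn hsm
    have h1 := length_of_mem_An hsn
    have h2 := length_of_mem_An hsm
    have h3 : L * (n + 1) = L * (m + 1) := by omega
    have h4 := Nat.eq_of_mul_eq_mul_left (show 0 < L by omega) h3
    omega
  · -- smallness
    intro n
    rw [hφ]
    refine lt_of_le_of_lt ?_ hxL
    apply iSup₂_le
    rintro B ⟨hBsub, -⟩
    have hBsub' : B ⊆ An L n := fun s hs => by exact_mod_cast hBsub hs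
    calc ∑ s ∈ B, (2 : ENNReal) ^ (-(s.length : ℤ))
        = ∑ _s ∈ B, (2⁻¹ : ENNReal) ^ (L * (n + 1)) := by
          apply Finset.sum_congr rfl
          intro s hs
          rw [pw, length_of_mem_An (hBsub' hs)]
      _ = (B.card : ENNReal) * 2⁻¹ ^ (L * (n + 1)) := by rw [Finset.sum_const, nsmul_eq_mul]
      _ ≤ ((An L n).card : ENNReal) * 2⁻¹ ^ (L * (n + 1)) := by
          gcongr
      _ = (2 : ENNReal) ^ (L * n) * (2⁻¹ ^ (L * n) * 2⁻¹ ^ L) := by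
          rw [card_An]
          push_cast
          rw [← pow_add, Nat.mul_succ]
      _ = 2⁻¹ ^ L := by rw [← mul_assoc, two_mul_inv_pow, one_mul]
  · -- the union bound
    refine ⟨2 ^ N, fun Y hY => ?_⟩
    set ν : Fin (2 ^ N) → ℕ := fun j => ((Y.orderIsoOfFin hY) j : ℕ) with hνdef
    have hν : StrictMono ν := fun a b hab => (Y.orderIsoOfFin hY).strictMono hab
    have hνY : ∀ j, ν j ∈ Y := fun j => ((Y.orderIsoOfFin hY) j).2
    set B : Finset (List Bool) := Finset.univ.biUnion (BjF L ν) with hB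
    -- B is contained in the union
    have hBsub : (B : Set (List Bool)) ⊆ ⋃ n ∈ Y, (An L n : Set (List Bool)) := by
      intro s hs
      obtain ⟨j, -, hj⟩ := Finset.mem_biUnion.mp (Finset.mem_coe.mp hs)
      obtain ⟨l, hl1, -, rfl⟩ := mem_BjF.mp hj
      exact Set.mem_biUnion (hνY j) (Finset.mem_coe.mpr (mem_An.mpr ⟨l, hl1, rfl⟩))
    -- B is an antichain
    have hBanti : ∀ s ∈ B, ∀ t ∈ B, s ≠ t → ¬ s <+: t := by
      intro s hs t ht hne hpre
      obtain ⟨i, -, hi⟩ := Finset.mem_biUnion.mp hs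
      obtain ⟨j, -, hj⟩ := Finset.mem_biUnion.mp ht
      obtain ⟨l, hl1, -, rfl⟩ := mem_BjF.mp hi
      obtain ⟨l', hl'1, hgood, rfl⟩ := mem_BjF.mp hj
      exact antichain_aux hν hl1 hl'1 hgood hne hpre
    -- the B_j are pairwise disjoint
    have hdisj : (↑(Finset.univ : Finset (Fin (2 ^ N))) : Set (Fin (2 ^ N))).PairwiseDisjoint (BjF L ν) := by
      intro a _ b _ hab
      show Disjoint (BjF L ν a) (BjF L ν b)
      rw [Finset.disjoint_left]
      intro s hsa hsb
      obtain ⟨l, hl1, -, rfl⟩ := mem_BjF.mp hsa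
      obtain ⟨l', hl'1, -, h⟩ := mem_BjF.mp hsb
      apply hab
      have hlen : l.length = l'.length := by
        have := congrArg List.length h
        simp only [List.length_append, List.length_replicate] at this
        omega
      rw [hl1, hl'1] at hlen
      exact hν.injective (Nat.eq_of_mul_eq_mul_left (show 0 < L by omega) hlen)
    -- the sum over B is at least 1/4
    have hconv : ∑ s ∈ B, (2 : ENNReal) ^ (-(s.length : ℤ))
        = ∑ j : Fin (2 ^ N), ((BjF L ν j).card : ENNReal) * 2⁻¹ ^ (L * (ν j + 1)) := by
      rw [hB, Finset.sum_biUnion hdisj]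
      apply Finset.sum_congr rfl
      intro j _
      rw [← nsmul_eq_mul, ← Finset.sum_const]
      apply Finset.sum_congr rfl
      intro s hs
      obtain ⟨l, hl1, -, rfl⟩ := mem_BjF.mp hs
      rw [pw]
      congr 1
      simp [hl1, Nat.mul_add]
    -- termwise lower bound
    have hterm : ∀ j : Fin (2 ^ N),
        (2⁻¹ : ENNReal) ^ L ≤ ((BjF L ν j).card : ENNReal) * 2⁻¹ ^ (L * (ν j + 1))
          + (j : ℕ) * ((2 : ENNReal) ^ (L * ν j - L) * 2⁻¹ ^ (L * (ν j + 1))) := by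
      intro j
      have hcb : ((2 : ENNReal) ^ (L * ν j))
          ≤ ((BjF L ν j).card : ENNReal) + (j : ℕ) * 2 ^ (L * ν j - L) := by
        exact_mod_cast card_BjF hν j
      calc (2⁻¹ : ENNReal) ^ L
          = (2 : ENNReal) ^ (L * ν j) * 2⁻¹ ^ (L * ν j) * 2⁻¹ ^ L := by
            rw [two_mul_inv_pow, one_mul]
        _ = (2 : ENNReal) ^ (L * ν j) * 2⁻¹ ^ (L * (ν j + 1)) := by
            rw [mul_assoc, ← pow_add, Nat.mul_succ]
        _ ≤ (((BjF L ν j).card : ENNReal) + (j : ℕ) * 2 ^ (L * ν j - L))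
              * 2⁻¹ ^ (L * (ν j + 1)) := by gcongr
        _ = _ := by ring
    have hterm' : ∀ j : Fin (2 ^ N),
        (2⁻¹ : ENNReal) ^ L ≤ ((BjF L ν j).card : ENNReal) * 2⁻¹ ^ (L * (ν j + 1))
          + (j : ℕ) * 2⁻¹ ^ (2 * L) := by
      intro j
      refine le_trans (hterm j) (add_le_add_right ?_ _)
      rcases Nat.eq_zero_or_pos (ν j) with h0 | hpos
      · have hj0 : (j : ℕ) = 0 := by
          by_contra hc
          have hpos' : 0 < (j : ℕ) := Nat.pos_of_ne_zero hc
          have hk : 0 < 2 ^ N := lt_of_le_of_lt (Nat.zero_le _) j.2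
          have := hν (a := ⟨0, hk⟩) (b := j) (Fin.lt_def.mpr (by simpa using hpos'))
          omega
        simp [hj0]
      · apply mul_le_mul_right
        apply le_of_eq
        have hexp : L * (ν j + 1) = (L * ν j - L) + 2 * L := by
          have hLle : L ≤ L * ν j := by
            calc L = L * 1 := (mul_one L).symm
              _ ≤ L * ν j := Nat.mul_le_mul_left L hpos
          have e1 : L * (ν j + 1) = L * ν j + L := by rw [Nat.mul_succ]
          omega
        rw [hexp, pow_add, ← mul_assoc, two_mul_inv_pow, one_mul]
    -- summing
    have hsum1 : ((2 : ENNReal) ^ N) * 2⁻¹ ^ L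
        ≤ (∑ j : Fin (2 ^ N), ((BjF L ν j).card : ENNReal) * 2⁻¹ ^ (L * (ν j + 1)))
          + (∑ j : Fin (2 ^ N), ((j : ℕ) : ENNReal)) * 2⁻¹ ^ (2 * L) := by
      calc ((2 : ENNReal) ^ N) * 2⁻¹ ^ L = ∑ _j : Fin (2 ^ N), (2⁻¹ : ENNReal) ^ L := by
            rw [Finset.sum_const, nsmul_eq_mul]
            congr 1
            simp
        _ ≤ ∑ j : Fin (2 ^ N), (((BjF L ν j).card : ENNReal) * 2⁻¹ ^ (L * (ν j + 1))
              + (j : ℕ) * 2⁻¹ ^ (2 * L)) := Finset.sum_le_sum (fun j _ => hterm' j)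
        _ = _ := by rw [Finset.sum_add_distrib, ← Finset.sum_mul]
    have hlhs : ((2 : ENNReal) ^ N) * 2⁻¹ ^ L = 2⁻¹ := by
      rw [hL, pow_succ, ← mul_assoc, two_mul_inv_pow, one_mul]
    have hsmall : (∑ j : Fin (2 ^ N), ((j : ℕ) : ENNReal)) * 2⁻¹ ^ (2 * L) ≤ 2⁻¹ * 2⁻¹ := by
      have h1 : (∑ j : Fin (2 ^ N), ((j : ℕ) : ENNReal)) ≤ (2 : ENNReal) ^ N * 2 ^ N := by
        calc (∑ j : Fin (2 ^ N), ((j : ℕ) : ENNReal))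
            ≤ ∑ _j : Fin (2 ^ N), ((2 : ENNReal) ^ N) := by
              apply Finset.sum_le_sum
              intro j _
              exact_mod_cast (j.2.le : (j : ℕ) ≤ 2 ^ N)
          _ = (2 : ENNReal) ^ N * 2 ^ N := by
              rw [Finset.sum_const, nsmul_eq_mul]
              congr 1
              simp
      calc (∑ j : Fin (2 ^ N), ((j : ℕ) : ENNReal)) * 2⁻¹ ^ (2 * L)
          ≤ (2 : ENNReal) ^ N * 2 ^ N * 2⁻¹ ^ (2 * L) := by gcongr
        _ = ((2 : ENNReal) ^ N * 2⁻¹ ^ N) * ((2 : ENNReal) ^ N * 2⁻¹ ^ N) * (2⁻¹ * 2⁻¹) := by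
            rw [hL]; ring
        _ = 2⁻¹ * 2⁻¹ := by rw [two_mul_inv_pow, one_mul, one_mul]
    have key : (2⁻¹ * 2⁻¹ : ENNReal) + 2⁻¹ * 2⁻¹ = 2⁻¹ := by
      rw [← mul_add, ENNReal.inv_two_add_inv_two, mul_one]
    have hfinal : (2⁻¹ * 2⁻¹ : ENNReal) + 2⁻¹ * 2⁻¹
        ≤ (∑ j : Fin (2 ^ N), ((BjF L ν j).card : ENNReal) * 2⁻¹ ^ (L * (ν j + 1)))
          + 2⁻¹ * 2⁻¹ := by
      calc (2⁻¹ * 2⁻¹ : ENNReal) + 2⁻¹ * 2⁻¹ = 2⁻¹ := key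
        _ = ((2 : ENNReal) ^ N) * 2⁻¹ ^ L := hlhs.symm
        _ ≤ _ + (∑ j : Fin (2 ^ N), ((j : ℕ) : ENNReal)) * 2⁻¹ ^ (2 * L) := hsum1
        _ ≤ _ + 2⁻¹ * 2⁻¹ := add_le_add_right hsmall _
    have hsum : (2⁻¹ * 2⁻¹ : ENNReal) ≤ ∑ s ∈ B, (2 : ENNReal) ^ (-(s.length : ℤ)) := by
      rw [hconv]
      exact (ENNReal.add_le_add_iff_right (ENNReal.mul_ne_top (by simp) (by simp))).mp hfinal
    rw [hφ]
    refine le_trans hsum ?_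
    exact le_iSup₂ (f := fun (B : Finset (List Bool))
      (_ : ↑B ⊆ (⋃ n ∈ Y, (An L n : Set (List Bool))) ∧ ∀ s ∈ B, ∀ t ∈ B, s ≠ t → ¬ s <+: t) =>
      ∑ s ∈ B, (2 : ENNReal) ^ (-(s.length : ℤ))) B ⟨hBsub, hBanti⟩
end

section
/- Let J be an ideal on ℕ. Then J is representable in c₀, i.e. there exists h : ℕ → c₀ such that for every A ⊆ ℕ, A ∈ J iff ∑_{n∈A} h(n) converges unconditionally in c₀, if and only if there exists a family m : ℕ → ℕ → [0,∞) of mass functions such that {k ∈ ℕ : m(k)(n) ≠ 0} is finite for every n ∈ ℕ and, with φ(A) = sup_{k∈ℕ} ∑_{n∈A} m(k)(n), for every A ⊆ ℕ: A ∈ J iff φ(A \ [0,N)) → 0 as N → ∞. -/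
open Filter Topology
open scoped ZeroAtInfty ENNReal


noncomputable def mkFin (f : ℕ → ℝ) (hf : {k : ℕ | f k ≠ 0}.Finite) : C₀(ℕ, ℝ) :=
  ⟨⟨f, continuous_of_discreteTopology⟩, by
    rw [cocompact_eq_cofinite]
    exact tendsto_nhds_of_eventually_eq (Filter.eventually_cofinite.mpr hf)⟩

@[simp] lemma mkFin_apply (f : ℕ → ℝ) (hf) (k : ℕ) : mkFin f hf k = f k := rfl

lemma c0_sum_apply {ι : Type*} (s : Finset ι) (g : ι → C₀(ℕ, ℝ)) (k : ℕ) :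
    (∑ n ∈ s, g n) k = ∑ n ∈ s, g n k := by
  induction s using Finset.cons_induction with
  | empty => simp
  | cons a s ha ih => simp [Finset.sum_cons, ih]

lemma c0_apply_le_norm (f : C₀(ℕ, ℝ)) (k : ℕ) : |f k| ≤ ‖f‖ := by
  rw [← ZeroAtInftyContinuousMap.norm_toBCF_eq_norm]
  exact (Real.norm_eq_abs _) ▸ f.toBCF.norm_coe_le_norm k

lemma c0_norm_le (f : C₀(ℕ, ℝ)) {C : ℝ} (hC : 0 ≤ C) (h : ∀ k, |f k| ≤ C) : ‖f‖ ≤ C := by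
  rw [← ZeroAtInftyContinuousMap.norm_toBCF_eq_norm]
  exact BoundedContinuousFunction.norm_le hC |>.mpr fun k => (Real.norm_eq_abs _) ▸ h k

lemma c0_approx (f : C₀(ℕ, ℝ)) {ε : ℝ} (hε : 0 < ε) :
    ∃ g : C₀(ℕ, ℝ), {k : ℕ | (g : ℕ → ℝ) k ≠ 0}.Finite ∧ ‖f - g‖ ≤ ε := by
  have hz : Tendsto (⇑f) atTop (𝓝 0) := by
    rw [← cocompact_eq_atTop (α := ℕ)]; exact zero_at_infty f
  obtain ⟨N, hN⟩ := (Metric.tendsto_atTop.mp hz ε hε)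
  have hfin : {k : ℕ | (fun k => if k < N then f k else 0) k ≠ 0}.Finite :=
    (Set.finite_Iio N).subset (fun k hk => by by_contra h; simp [Set.mem_Iio] at h hk; omega)
  refine ⟨mkFin (fun k => if k < N then f k else 0) hfin, hfin, ?_⟩
  · refine c0_norm_le _ hε.le fun k => ?_
    have : (f - mkFin (fun k => if k < N then f k else 0) hfin) k
        = f k - (if k < N then f k else 0) := rfl
    rw [this]
    by_cases h : k < N
    · simp [h, hε.le]
    · have := hN k (by omega)
      simp only [dist_zero_right, Real.norm_eq_abs] at this
      simp [h, this.le]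

lemma core (g : ℕ → C₀(ℕ, ℝ)) (A : Set ℕ) :
    Summable (fun n : A => g n) ↔
    Tendsto (fun N : ℕ => ⨆ k : ℕ, ∑' n : ↥(A \ Set.Iio N), ENNReal.ofReal |g ↑n k|)
      atTop (𝓝 0) := by
  set φ : ℕ → ℝ≥0∞ :=
    fun N => ⨆ k : ℕ, ∑' n : ↥(A \ Set.Iio N), ENNReal.ofReal |g ↑n k| with hφ
  have hanti : Antitone φ := by
    intro N M hNM
    refine iSup_mono fun k => ?_
    rw [tsum_subtype (A \ Set.Iio M) (fun j => ENNReal.ofReal |g j k|),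
        tsum_subtype (A \ Set.Iio N) (fun j => ENNReal.ofReal |g j k|)]
    refine ENNReal.tsum_le_tsum fun n =>
      Set.indicator_le_indicator_of_subset
        (Set.diff_subset_diff_right fun x hx => lt_of_lt_of_le hx hNM)
        (fun _ => zero_le) n
  constructor
  · intro hsum
    rw [ENNReal.tendsto_atTop_zero]
    intro ε hε
    set ε' : ℝ≥0∞ := min ε 1 with hε'
    have hε'pos : 0 < ε' := lt_min hε zero_lt_one
    have hε'top : ε' ≠ ⊤ := ne_top_of_le_ne_top ENNReal.one_ne_top (min_le_right _ _)
    set δ : ℝ := ε'.toReal / 2 with hδ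
    have hδpos : 0 < δ := by
      have := ENNReal.toReal_pos hε'pos.ne' hε'top
      positivity
    obtain ⟨s, hs⟩ := summable_iff_vanishing.mp hsum (Metric.ball 0 δ) (Metric.ball_mem_nhds 0 hδpos)
    set N : ℕ := (s.sup fun n => (n : ℕ)) + 1 with hN
    refine ⟨N, fun M hM => le_trans (hanti hM) ?_⟩
    have key : φ N ≤ ENNReal.ofReal (2 * δ) := by
      refine iSup_le fun k => ?_
      rw [ENNReal.tsum_eq_iSup_sum]
      refine iSup_le fun t => ?_
      rw [← ENNReal.ofReal_sum_of_nonneg (fun n _ => abs_nonneg _)]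
      refine ENNReal.ofReal_le_ofReal ?_
      -- real estimate
      have hsub : A \ Set.Iio N ⊆ A := Set.diff_subset
      set emb : ↥(A \ Set.Iio N) ↪ ↥A :=
        ⟨Set.inclusion hsub, Set.inclusion_injective hsub⟩ with hemb
      have hdisj : ∀ t' : Finset ↥(A \ Set.Iio N), Disjoint (t'.map emb) s := by
        intro t'
        rw [Finset.disjoint_left]
        rintro x hx hxs
        obtain ⟨n, hn, rfl⟩ := Finset.mem_map.mp hx
        have h1 : (n : ℕ) ∉ Set.Iio N := n.2.2
        have h2 : (n : ℕ) ≤ s.sup fun n => (n : ℕ) := Finset.le_sup (f := fun n : ↥A => (n : ℕ)) hxs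
        simp only [Set.mem_Iio, hN] at h1
        omega
      have hsum_eq : ∀ t' : Finset ↥(A \ Set.Iio N),
          ∑ n ∈ t', g ↑n k = (∑ x ∈ t'.map emb, g ↑x) k := by
        intro t'
        rw [c0_sum_apply, Finset.sum_map]
        rfl
      have hbound : ∀ t' : Finset ↥(A \ Set.Iio N), |∑ n ∈ t', g ↑n k| ≤ δ := by
        intro t'
        calc |∑ n ∈ t', g ↑n k| = |(∑ x ∈ t'.map emb, g ↑x) k| := by rw [hsum_eq]
          _ ≤ ‖∑ x ∈ t'.map emb, g ↑x‖ := c0_apply_le_norm _ _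
          _ ≤ δ := by
              have := hs _ (hdisj t')
              rw [mem_ball_zero_iff] at this
              exact this.le
      set tP := t.filter (fun n : ↥(A \ Set.Iio N) => 0 ≤ g ↑n k) with htP
      set tN := t.filter (fun n : ↥(A \ Set.Iio N) => ¬ 0 ≤ g ↑n k) with htN
      have hsplit : ∑ n ∈ t, |g ↑n k| = ∑ n ∈ tP, |g ↑n k| + ∑ n ∈ tN, |g ↑n k| :=
        (Finset.sum_filter_add_sum_filter_not t _ _).symm
      have hP : ∑ n ∈ tP, |g ↑n k| ≤ δ := by
        have : ∑ n ∈ tP, |g ↑n k| = ∑ n ∈ tP, g ↑n k :=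
          Finset.sum_congr rfl fun n hn => abs_of_nonneg (Finset.mem_filter.mp hn).2
        rw [this]
        exact le_trans (le_abs_self _) (hbound tP)
      have hNn : ∑ n ∈ tN, |g ↑n k| ≤ δ := by
        have : ∑ n ∈ tN, |g ↑n k| = -∑ n ∈ tN, g ↑n k := by
          rw [← Finset.sum_neg_distrib]
          exact Finset.sum_congr rfl fun n hn =>
            abs_of_neg (lt_of_not_ge (Finset.mem_filter.mp hn).2)
        rw [this]
        exact le_trans (neg_le_abs _) (hbound tN)
      linarith
    refine key.trans ?_
    have : ENNReal.ofReal (2 * δ) = ε' := by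
      rw [hδ]
      rw [show 2 * (ε'.toReal / 2) = ε'.toReal by ring, ENNReal.ofReal_toReal hε'top]
    rw [this]
    exact min_le_left _ _
  · intro htend
    rw [summable_iff_vanishing]
    intro e he
    obtain ⟨δ, hδpos, hδ⟩ := Metric.mem_nhds_iff.mp he
    obtain ⟨N, hN⟩ := (ENNReal.tendsto_atTop_zero.mp htend) (ENNReal.ofReal (δ / 2))
      (by simp [ENNReal.ofReal_pos]; positivity)
    have hsfin : {n : ↥A | (n : ℕ) < N}.Finite :=
      Set.Finite.preimage (Subtype.coe_injective.injOn) (Set.finite_Iio N)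
    refine ⟨hsfin.toFinset, fun t ht => ?_⟩
    apply hδ
    rw [mem_ball_zero_iff]
    have hnormle : ‖∑ n ∈ t, g ↑n‖ ≤ δ / 2 := by
      refine c0_norm_le _ (by positivity) fun k => ?_
      rw [c0_sum_apply]
      refine le_trans (Finset.abs_sum_le_sum_abs _ _) ?_
      -- move to ENNReal
      have h1 : ENNReal.ofReal (∑ n ∈ t, |g ↑n k|) ≤ ENNReal.ofReal (δ / 2) := by
        rw [ENNReal.ofReal_sum_of_nonneg (fun n _ => abs_nonneg _)]
        set t' : Finset ℕ := t.image (fun n : ↥A => (n : ℕ)) with ht'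
        have himg : ∑ n ∈ t, ENNReal.ofReal |g ↑n k| = ∑ j ∈ t', ENNReal.ofReal |g j k| := by
          rw [ht', Finset.sum_image (fun a _ b _ hab => Subtype.coe_injective hab)]
        rw [himg]
        have hsubset : ∀ j ∈ t', j ∈ A \ Set.Iio N := by
          intro j hj
          obtain ⟨n, hn, rfl⟩ := Finset.mem_image.mp hj
          refine ⟨n.2, ?_⟩
          have : n ∉ hsfin.toFinset := Finset.disjoint_left.mp ht hn
          simp only [Set.Finite.mem_toFinset, Set.mem_setOf_eq] at this
          simpa using this
        calc ∑ j ∈ t', ENNReal.ofReal |g j k|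
            = ∑ j ∈ t', (A \ Set.Iio N).indicator (fun j => ENNReal.ofReal |g j k|) j :=
              Finset.sum_congr rfl fun j hj => (Set.indicator_of_mem (hsubset j hj) (fun j => ENNReal.ofReal |g j k|)).symm
          _ ≤ ∑' j : ℕ, (A \ Set.Iio N).indicator (fun j => ENNReal.ofReal |g j k|) j :=
              ENNReal.sum_le_tsum t'
          _ = ∑' n : ↥(A \ Set.Iio N), ENNReal.ofReal |g ↑n k| := (tsum_subtype _ _).symm
          _ ≤ φ N := le_iSup (fun k => ∑' n : ↥(A \ Set.Iio N), ENNReal.ofReal |g ↑n k|) k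
          _ ≤ ENNReal.ofReal (δ / 2) := hN N le_rfl
      rwa [ENNReal.ofReal_le_ofReal_iff (by positivity)] at h1
    linarith

lemma transfer (h g : ℕ → C₀(ℕ, ℝ)) (hb : ∀ n, ‖h n - g n‖ ≤ (1/2 : ℝ)^n) (A : Set ℕ) :
    Summable (fun n : A => h n) ↔ Summable (fun n : A => g n) := by
  have hgeo : Summable (fun n : A => ((1/2 : ℝ))^(n : ℕ)) :=
    (summable_geometric_of_lt_one (by norm_num) (by norm_num)).subtype A
  have hd : Summable (fun n : A => h ↑n - g ↑n) :=
    Summable.of_norm_bounded hgeo (fun n => hb n)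
  constructor
  · intro H
    have := H.sub hd
    simpa using this
  · intro H
    have := H.add hd
    simpa using this

/-- an ideal `J` on ℕ is representable in `c₀` iff `J = Exh(φ)` for a
supremum `φ` of countably many measures such that every point carries nonzero mass for
only finitely many of them. -/
theorem stmt9 (J : Set (Set ℕ))
    (hfin : ∀ A : Set ℕ, A.Finite → A ∈ J)
    (hdown : ∀ A B : Set ℕ, A ⊆ B → B ∈ J → A ∈ J)
    (hunion : ∀ A B : Set ℕ, A ∈ J → B ∈ J → A ∪ B ∈ J)
    (hproper : Set.univ ∉ J) :
    (∃ h : ℕ → C₀(ℕ, ℝ), ∀ A : Set ℕ, A ∈ J ↔ Summable (fun n : A => h n)) ↔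
    (∃ m : ℕ → ℕ → ℝ,
      (∀ k n : ℕ, 0 ≤ m k n) ∧
      (∀ n : ℕ, {k : ℕ | m k n ≠ 0}.Finite) ∧
      ∀ A : Set ℕ, A ∈ J ↔
        Tendsto
          (fun N : ℕ => ⨆ k : ℕ, ∑' n : ↥(A \ Set.Iio N), ENNReal.ofReal (m k ↑n))
          atTop (𝓝 0)) := by
  constructor
  · rintro ⟨h, hh⟩
    have hap : ∀ n : ℕ, ∃ gn : C₀(ℕ, ℝ), {k : ℕ | (gn : ℕ → ℝ) k ≠ 0}.Finite ∧
        ‖h n - gn‖ ≤ (1/2 : ℝ)^n := fun n => c0_approx (h n) (by positivity)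
    choose g hgfin hgnorm using hap
    refine ⟨fun k n => |g n k|, fun k n => abs_nonneg _, fun n => ?_, fun A => ?_⟩
    · exact (hgfin n).subset (fun k hk => by simpa using hk)
    · exact ((hh A).trans (transfer h g hgnorm A)).trans (core g A)
  · rintro ⟨m, hpos, hmfin, hrep⟩
    have hsupp : ∀ n : ℕ, {k : ℕ | (fun k => m k n) k ≠ 0}.Finite := fun n => hmfin n
    set g : ℕ → C₀(ℕ, ℝ) := fun n => mkFin (fun k => m k n) (hsupp n) with hg
    refine ⟨g, fun A => ?_⟩
    rw [hrep A, core g A]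
    have : (fun N : ℕ => ⨆ k : ℕ, ∑' n : ↥(A \ Set.Iio N), ENNReal.ofReal |g ↑n k|)
        = fun N : ℕ => ⨆ k : ℕ, ∑' n : ↥(A \ Set.Iio N), ENNReal.ofReal (m k ↑n) := by
      funext N
      refine iSup_congr fun k => tsum_congr fun n => ?_
      rw [hg, mkFin_apply, abs_of_nonneg (hpos k n)]
    rw [this]
end

section
/- Let m : ℕ → ℕ → [0,∞) be a family of mass functions such that (i) {k ∈ ℕ : m(k)(n) ≠ 0} is finite for every n ∈ ℕ, and (ii) each induced measure is bounded: ∑_{n∈ℕ} m(k)(n) < ∞ for every k. Define φ(A) = sup_{k∈ℕ} ∑_{n∈A} m(k)(n) for A ⊆ ℕ. Then Exh(φ) is a generalized density ideal: there exist a sequence (φ_j)_{j∈ℕ} of submeasures on ℕ and pairwise disjoint finite sets S_j ⊆ ℕ with φ_j(A) = φ_j(A ∩ S_j) for all A, such that for every A ⊆ ℕ: A ∈ Exh(φ) iff φ_j(A) → 0 as j → ∞. -/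
open Filter Topology

namespace Stmt10

noncomputable def mu (m : ℕ → ℕ → ℝ) (k : ℕ) (B : Set ℕ) : ENNReal :=
  ∑' n : ↥B, ENNReal.ofReal (m k ↑n)

lemma mu_indicator (m : ℕ → ℕ → ℝ) (k : ℕ) (B : Set ℕ) :
    mu m k B = ∑' n, B.indicator (fun x => ENNReal.ofReal (m k x)) n := by
  unfold mu; exact tsum_subtype B (fun x => ENNReal.ofReal (m k x))

lemma mu_mono (m : ℕ → ℕ → ℝ) (k : ℕ) {A B : Set ℕ} (h : A ⊆ B) :
    mu m k A ≤ mu m k B := by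
  rw [mu_indicator, mu_indicator]
  exact ENNReal.tsum_le_tsum fun n =>
    Set.indicator_le_indicator_of_subset h (fun _ => zero_le) n

lemma mu_union (m : ℕ → ℕ → ℝ) (k : ℕ) (A B : Set ℕ) :
    mu m k (A ∪ B) ≤ mu m k A + mu m k B := by
  rw [mu_indicator, mu_indicator, mu_indicator, ← ENNReal.tsum_add]
  refine ENNReal.tsum_le_tsum fun n => ?_
  by_cases hA : n ∈ A <;> by_cases hB : n ∈ B <;>
    simp [Set.indicator, hA, hB]

lemma mu_zero (m : ℕ → ℕ → ℝ) (k : ℕ) {Z : Set ℕ} (h : ∀ x ∈ Z, m k x = 0) :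
    mu m k Z = 0 :=
  ENNReal.tsum_eq_zero.mpr fun ⟨x, hx⟩ => by simp [h x hx]

lemma mu_tail (m : ℕ → ℕ → ℝ) (k : ℕ) (h0 : ∀ n, 0 ≤ m k n) (hbdd : Summable (m k)) :
    Tendsto (fun N => mu m k {x | N ≤ x}) atTop (𝓝 0) := by
  have htop : ∑' n, ENNReal.ofReal (m k n) ≠ ⊤ := by
    rw [← ENNReal.ofReal_tsum_of_nonneg h0 hbdd]
    exact ENNReal.ofReal_ne_top
  have h1 := (ENNReal.tendsto_tsum_compl_atTop_zero htop).comp tendsto_finset_range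
  convert h1 using 2 with N
  have hset : {x : ℕ | N ≤ x} = {x : ℕ | x ∉ Finset.range N} := by
    ext x; simp [Finset.mem_range, not_lt]
  rw [Function.comp]
  show mu m k {x | N ≤ x} = _
  rw [hset]
  rfl

end Stmt10

/-- if `φ` is the supremum of countably many *bounded* measures such that
every point carries nonzero mass for only finitely many of them, then `Exh(φ)` is a
generalized density ideal. -/
theorem stmt10 (m : ℕ → ℕ → ℝ)
    (hm : ∀ k n : ℕ, 0 ≤ m k n)
    (hfinsupp : ∀ n : ℕ, {k : ℕ | m k n ≠ 0}.Finite)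
    (hbdd : ∀ k : ℕ, Summable (m k)) :
    ∃ (φs : ℕ → Set ℕ → ENNReal) (S : ℕ → Finset ℕ),
      (∀ i j : ℕ, i ≠ j → Disjoint (S i) (S j)) ∧
      (∀ j : ℕ, φs j ∅ = 0) ∧
      (∀ j : ℕ, ∀ A B : Set ℕ, A ⊆ B → φs j A ≤ φs j B) ∧
      (∀ j : ℕ, ∀ A B : Set ℕ, φs j (A ∪ B) ≤ φs j A + φs j B) ∧
      (∀ j : ℕ, ∀ A : Set ℕ, φs j A = φs j (A ∩ ↑(S j))) ∧
      ∀ A : Set ℕ,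
        Tendsto
          (fun N : ℕ => ⨆ k : ℕ, ∑' n : ↥(A \ Set.Iio N), ENNReal.ofReal (m k ↑n))
          atTop (𝓝 0) ↔
        Tendsto (fun j : ℕ => φs j A) atTop (𝓝 0) := by
  classical
  have htail : ∀ k, Tendsto (fun N => Stmt10.mu m k {x | N ≤ x}) atTop (𝓝 0) :=
    fun k => Stmt10.mu_tail m k (hm k) (hbdd k)
  -- the set of measures charging a point below M
  set Kset : ℕ → Set ℕ := fun M => {k | ∃ x, x < M ∧ m k x ≠ 0} with hKsetdef
  have hKfin : ∀ M, (Kset M).Finite := by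
    intro M
    refine ((Set.finite_Iio M).biUnion (fun x _ => hfinsupp x)).subset ?_
    rintro k ⟨x, hx, hne⟩
    exact Set.mem_biUnion hx hne
  have hKmono : ∀ {a b : ℕ}, a ≤ b → Kset a ⊆ Kset b := by
    rintro a b hab k ⟨x, hx, hne⟩
    exact ⟨x, lt_of_lt_of_le hx hab, hne⟩
  -- choosing the blocks
  have step : ∀ c j : ℕ, ∃ d, c < d ∧
      ∀ k ∈ Kset c, Stmt10.mu m k {x | d ≤ x} < 2⁻¹ ^ j := by
    intro c j
    have hev : ∀ᶠ d in atTop, ∀ k ∈ Kset c, Stmt10.mu m k {x | d ≤ x} < 2⁻¹ ^ j := by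
      rw [(hKfin c).eventually_all]
      intro k _
      refine (htail k).eventually_lt_const ?_
      exact ENNReal.pow_pos (by norm_num) j
    obtain ⟨d0, hd0⟩ := eventually_atTop.1 hev
    exact ⟨max d0 (c + 1), lt_of_lt_of_le (Nat.lt_succ_self c) (le_max_right _ _),
      hd0 _ (le_max_left _ _)⟩
  choose F hF1 hF2 using step
  set n : ℕ → ℕ := fun j => Nat.rec 0 (fun j c => F c j) j with hndef
  have hnsucc : ∀ j, n (j + 1) = F (n j) j := fun j => rfl
  have hnmono : StrictMono n := strictMono_nat_of_lt_succ fun j => hF1 (n j) j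
  have hnprop : ∀ j, ∀ k ∈ Kset (n j), Stmt10.mu m k {x | n (j + 1) ≤ x} < 2⁻¹ ^ j :=
    fun j => hF2 (n j) j
  set φs : ℕ → Set ℕ → ENNReal :=
    fun j A => ⨆ k, Stmt10.mu m k (A ∩ Set.Ico (n j) (n (j + 1))) with hφsdef
  refine ⟨φs, fun j => Finset.Ico (n j) (n (j + 1)), ?_, ?_, ?_, ?_, ?_, ?_⟩
  · -- disjointness
    have key : ∀ i j : ℕ, i < j →
        Disjoint (Finset.Ico (n i) (n (i + 1))) (Finset.Ico (n j) (n (j + 1))) := by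
      intro i j hij
      have h1 : n (i + 1) ≤ n j := hnmono.monotone hij
      rw [Finset.disjoint_left]
      intro x hx hx'
      simp only [Finset.mem_Ico] at hx hx'
      omega
    intro i j hij
    rcases hij.lt_or_gt with h | h
    · exact key i j h
    · exact (key j i h).symm
  · intro j
    simp only [hφsdef, Set.empty_inter]
    simp [Stmt10.mu]
  · intro j A B hAB
    exact iSup_mono fun k => Stmt10.mu_mono m k (Set.inter_subset_inter_left _ hAB)
  · intro j A B
    refine iSup_le fun k => ?_
    rw [Set.union_inter_distrib_right]
    refine le_trans (Stmt10.mu_union m k _ _) (add_le_add ?_ ?_)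
    · exact le_iSup (fun k => Stmt10.mu m k (A ∩ Set.Ico (n j) (n (j + 1)))) k
    · exact le_iSup (fun k => Stmt10.mu m k (B ∩ Set.Ico (n j) (n (j + 1)))) k
  · intro j A
    simp only [hφsdef, Finset.coe_Ico, Set.inter_assoc, Set.inter_self]
  · intro A
    -- identify the LHS function with mu
    have hf : ∀ N : ℕ, (⨆ k : ℕ, ∑' n : ↥(A \ Set.Iio N), ENNReal.ofReal (m k ↑n)) =
        ⨆ k : ℕ, Stmt10.mu m k (A \ Set.Iio N) := fun N => rfl
    have hanti : ∀ {N N' : ℕ}, N ≤ N' →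
        (⨆ k : ℕ, Stmt10.mu m k (A \ Set.Iio N')) ≤
          ⨆ k : ℕ, Stmt10.mu m k (A \ Set.Iio N) := by
      intro N N' h
      exact iSup_mono fun k => Stmt10.mu_mono m k
        (Set.diff_subset_diff_right (Set.Iio_subset_Iio h))
    constructor
    · intro h
      refine tendsto_of_tendsto_of_tendsto_of_le_of_le tendsto_const_nhds h
        (fun j => zero_le) (fun j => ?_)
      calc φs j A ≤ ⨆ k : ℕ, Stmt10.mu m k (A \ Set.Iio (n j)) := by
            refine iSup_mono fun k => Stmt10.mu_mono m k ?_
            rintro x ⟨hxA, hx1, _⟩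
            exact ⟨hxA, not_lt.2 hx1⟩
        _ ≤ ⨆ k : ℕ, Stmt10.mu m k (A \ Set.Iio j) := hanti hnmono.le_apply
        _ = _ := (hf j).symm
    · intro h
      rw [show (fun N : ℕ => ⨆ k : ℕ, ∑' n : ↥(A \ Set.Iio N), ENNReal.ofReal (m k ↑n)) =
          fun N : ℕ => ⨆ k : ℕ, Stmt10.mu m k (A \ Set.Iio N) from rfl]
      rw [ENNReal.tendsto_nhds_zero]
      intro ε hε
      have hε2 : (0 : ENNReal) < ε / 2 := ENNReal.div_pos hε.ne' (by norm_num)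
      have hε4 : (0 : ENNReal) < ε / 2 / 2 := ENNReal.div_pos hε2.ne' (by norm_num)
      have h1 : ∀ᶠ j : ℕ in atTop, φs j A ≤ ε / 2 / 2 :=
        (ENNReal.tendsto_nhds_zero.1 h) _ hε4
      have h2 : ∀ᶠ j : ℕ in atTop, (2⁻¹ : ENNReal) ^ j ≤ ε / 2 :=
        (ENNReal.tendsto_nhds_zero.1
          (ENNReal.tendsto_pow_atTop_nhds_zero_of_lt_one (by norm_num))) _ hε2
      obtain ⟨j0, hj0⟩ := eventually_atTop.1 (h1.and h2)
      -- key estimate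
      have key : ∀ k, Stmt10.mu m k (A \ Set.Iio (n j0)) ≤ ε := by
        intro k
        by_cases hK : ∃ i, k ∈ Kset (n i)
        · have hPi₀ : k ∈ Kset (n (Nat.find hK)) := Nat.find_spec hK
          by_cases hle : Nat.find hK ≤ j0
          · -- k already charges a point below n j0
            have hkj : k ∈ Kset (n j0) := hKmono (hnmono.monotone hle) hPi₀
            have hsub : A \ Set.Iio (n j0) ⊆
                (A ∩ Set.Ico (n j0) (n (j0 + 1))) ∪ {x | n (j0 + 1) ≤ x} := by
              rintro x ⟨hxA, hx⟩
              simp only [Set.mem_Iio, not_lt] at hx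
              by_cases hx2 : x < n (j0 + 1)
              · exact Or.inl ⟨hxA, hx, hx2⟩
              · exact Or.inr (not_lt.1 hx2)
            calc Stmt10.mu m k (A \ Set.Iio (n j0))
                ≤ Stmt10.mu m k (A ∩ Set.Ico (n j0) (n (j0 + 1))) +
                    Stmt10.mu m k {x | n (j0 + 1) ≤ x} :=
                  le_trans (Stmt10.mu_mono m k hsub) (Stmt10.mu_union m k _ _)
              _ ≤ φs j0 A + (2⁻¹ : ENNReal) ^ j0 :=
                  add_le_add
                    (le_iSup (fun k => Stmt10.mu m k (A ∩ Set.Ico (n j0) (n (j0 + 1)))) k)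
                    (hnprop j0 k hkj).le
              _ ≤ ε / 2 / 2 + ε / 2 :=
                  add_le_add (hj0 j0 le_rfl).1 (hj0 j0 le_rfl).2
              _ ≤ ε / 2 + ε / 2 :=
                  add_le_add (ENNReal.half_le_self) le_rfl
              _ = ε := ENNReal.add_halves ε
          · -- first charged block is i₀ - 1 ≥ j0
            push_neg at hle
            obtain ⟨i, hieq, hij0⟩ : ∃ i, Nat.find hK = i + 1 ∧ j0 ≤ i :=
              ⟨Nat.find hK - 1, by omega, by omega⟩
            rw [hieq] at hPi₀
            have hnotP : k ∉ Kset (n i) := Nat.find_min hK (by omega)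
            -- m k vanishes below n i
            have hvanish : ∀ x ∈ (A \ Set.Iio (n j0)) ∩ Set.Iio (n i), m k x = 0 := by
              rintro x ⟨-, hx⟩
              by_contra hne
              exact hnotP ⟨x, hx, hne⟩
            have hsub1 : A \ Set.Iio (n j0) ⊆
                ((A \ Set.Iio (n j0)) ∩ Set.Iio (n i)) ∪ (A \ Set.Iio (n i)) := by
              rintro x ⟨hxA, hx⟩
              by_cases hx2 : x < n i
              · exact Or.inl ⟨⟨hxA, hx⟩, hx2⟩
              · exact Or.inr ⟨hxA, hx2⟩
            have hsub2 : A \ Set.Iio (n i) ⊆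
                (A ∩ Set.Ico (n i) (n (i + 1))) ∪
                  ((A ∩ Set.Ico (n (i + 1)) (n (i + 2))) ∪ {x | n (i + 2) ≤ x}) := by
              rintro x ⟨hxA, hx⟩
              simp only [Set.mem_Iio, not_lt] at hx
              by_cases hx2 : x < n (i + 1)
              · exact Or.inl ⟨hxA, hx, hx2⟩
              · by_cases hx3 : x < n (i + 2)
                · exact Or.inr (Or.inl ⟨hxA, not_lt.1 hx2, hx3⟩)
                · exact Or.inr (Or.inr (not_lt.1 hx3))
            calc Stmt10.mu m k (A \ Set.Iio (n j0))
                ≤ Stmt10.mu m k ((A \ Set.Iio (n j0)) ∩ Set.Iio (n i)) +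
                    Stmt10.mu m k (A \ Set.Iio (n i)) :=
                  le_trans (Stmt10.mu_mono m k hsub1) (Stmt10.mu_union m k _ _)
              _ = Stmt10.mu m k (A \ Set.Iio (n i)) := by
                  rw [Stmt10.mu_zero m k hvanish, zero_add]
              _ ≤ Stmt10.mu m k (A ∩ Set.Ico (n i) (n (i + 1))) +
                    (Stmt10.mu m k (A ∩ Set.Ico (n (i + 1)) (n (i + 2))) +
                      Stmt10.mu m k {x | n (i + 2) ≤ x}) :=
                  le_trans (Stmt10.mu_mono m k hsub2)
                    (le_trans (Stmt10.mu_union m k _ _)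
                      (add_le_add le_rfl (Stmt10.mu_union m k _ _)))
              _ ≤ φs i A + (φs (i + 1) A + (2⁻¹ : ENNReal) ^ (i + 1)) :=
                  add_le_add
                    (le_iSup (fun k => Stmt10.mu m k (A ∩ Set.Ico (n i) (n (i + 1)))) k)
                    (add_le_add
                      (le_iSup (fun k =>
                        Stmt10.mu m k (A ∩ Set.Ico (n (i + 1)) (n (i + 2)))) k)
                      (hnprop (i + 1) k hPi₀).le)
              _ ≤ ε / 2 / 2 + (ε / 2 / 2 + ε / 2) :=
                  add_le_add (hj0 i hij0).1
                    (add_le_add (hj0 (i + 1) (by omega)).1 (hj0 (i + 1) (by omega)).2)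
              _ = ε := by rw [← add_assoc, ENNReal.add_halves (ε / 2), ENNReal.add_halves]
        · -- m k is identically zero
          push_neg at hK
          have hzero : ∀ x ∈ A \ Set.Iio (n j0), m k x = 0 := by
            intro x _
            by_contra hne
            exact hK (x + 1) ⟨x, lt_of_lt_of_le (Nat.lt_succ_self x) hnmono.le_apply, hne⟩
          rw [Stmt10.mu_zero m k hzero]
          exact zero_le
      filter_upwards [eventually_ge_atTop (n j0)] with N hN
      exact le_trans (hanti hN) (iSup_le key)
end

section
/- Let J be an ideal on ℕ which is representable in c₀ (there exists h : ℕ → c₀ such that for every A ⊆ ℕ, A ∈ J iff ∑_{n∈A} h(n) converges unconditionally in c₀) and totally bounded (for every lower semicontinuous submeasure φ on ℕ with J = Exh(φ), one has φ(ℕ) < ∞). Then J is a generalized density ideal: there exist a sequence (φ_j)_{j∈ℕ} of submeasures on ℕ and pairwise disjoint finite sets S_j ⊆ ℕ with φ_j(A) = φ_j(A ∩ S_j) for all A, such that J = {A ⊆ ℕ : φ_j(A) → 0 as j → ∞}. -/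
open Filter Topology
open scoped ZeroAtInfty ENNReal

namespace Stmt11Aux

noncomputable def mu (h : ℕ → C₀(ℕ, ℝ)) (k : ℕ) (B : Set ℕ) : ℝ≥0∞ :=
  ∑' n : B, (‖h n k‖₊ : ℝ≥0∞)

noncomputable def psi (h : ℕ → C₀(ℕ, ℝ)) (B : Set ℕ) : ℝ≥0∞ := ⨆ k, mu h k B

lemma sum_apply' (h : ℕ → C₀(ℕ, ℝ)) (F : Finset ℕ) (k : ℕ) :
    (∑ n ∈ F, h n) k = ∑ n ∈ F, h n k := by
  classical
  induction F using Finset.induction with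
  | empty => simp
  | insert _ _ hn ih =>
    rw [Finset.sum_insert hn, Finset.sum_insert hn, ← ih]
    rfl

lemma abs_eval_le_norm (g : C₀(ℕ, ℝ)) (k : ℕ) : |g k| ≤ ‖g‖ := by
  rw [← ZeroAtInftyContinuousMap.norm_toBCF_eq_norm, ← Real.norm_eq_abs]
  exact g.toBCF.norm_coe_le_norm k

lemma nnnorm_le_of_forall (g : C₀(ℕ, ℝ)) (c : NNReal) (hc : ∀ k, ‖g k‖₊ ≤ c) : ‖g‖₊ ≤ c := by
  rw [show ‖g‖₊ = ‖g.toBCF‖₊ from rfl]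
  exact (BoundedContinuousFunction.nnnorm_le g.toBCF c).2 hc

variable (h : ℕ → C₀(ℕ, ℝ))

lemma psi_def (B : Set ℕ) : psi h B = ⨆ k, mu h k B := rfl

lemma mu_finset (k : ℕ) (F : Finset ℕ) : mu h k ↑F = ∑ n ∈ F, (‖h n k‖₊ : ℝ≥0∞) :=
  F.tsum_subtype' fun n => (‖h n k‖₊ : ℝ≥0∞)

lemma mu_mono (k : ℕ) {B C : Set ℕ} (hBC : B ⊆ C) : mu h k B ≤ mu h k C :=
  ENNReal.summable.tsum_le_tsum_of_inj (Set.inclusion hBC) (Set.inclusion_injective hBC)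
    (fun _ _ => zero_le) (fun _ => le_rfl) ENNReal.summable

lemma mu_empty (k : ℕ) : mu h k ∅ = 0 := by simp [mu]

lemma mu_union_le (k : ℕ) (B C : Set ℕ) : mu h k (B ∪ C) ≤ mu h k B + mu h k C := by
  simpa only [mu] using ENNReal.tsum_union_le (fun n => (‖h n k‖₊ : ℝ≥0∞)) B C

lemma mu_eq_iSup (k : ℕ) (B : Set ℕ) :
    mu h k B = ⨆ (F : Finset ℕ) (_ : ↑F ⊆ B), mu h k ↑F := by
  classical
  apply le_antisymm
  · rw [mu, tsum_subtype B fun n => (‖h n k‖₊ : ℝ≥0∞), ENNReal.tsum_eq_iSup_sum]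
    apply iSup_le fun s => ?_
    have hsub : ↑(s.filter (· ∈ B)) ⊆ B := by
      intro x hx; simpa using (Finset.mem_filter.1 (by simpa using hx)).2
    refine le_trans ?_ (le_iSup_of_le (s.filter (· ∈ B)) (le_iSup_of_le hsub le_rfl))
    rw [mu_finset, Finset.sum_indicator_eq_sum_filter]
  · exact iSup_le fun F => iSup_le fun hF => mu_mono h k hF

lemma psi_empty : psi h ∅ = 0 := by simp [psi, mu_empty]

lemma psi_mono {B C : Set ℕ} (hBC : B ⊆ C) : psi h B ≤ psi h C :=
  iSup_mono fun k => mu_mono h k hBC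

lemma mu_le_psi (k : ℕ) (B : Set ℕ) : mu h k B ≤ psi h B := le_iSup (fun k => mu h k B) k

lemma psi_union_le (B C : Set ℕ) : psi h (B ∪ C) ≤ psi h B + psi h C :=
  iSup_le fun k => (mu_union_le h k B C).trans
    (add_le_add (mu_le_psi h k B) (mu_le_psi h k C))

lemma psi_singleton_lt_top (n : ℕ) : psi h {n} < ⊤ := by
  have hb : ∀ k, mu h k {n} ≤ (‖h n‖₊ : ℝ≥0∞) := by
    intro k
    have e : mu h k {n} = (‖h n k‖₊ : ℝ≥0∞) := by
      rw [mu, tsum_eq_single (⟨n, rfl⟩ : ({n} : Set ℕ))]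
      intro b hb
      exact absurd (Subtype.ext (show (b : ℕ) = n from b.2)) hb
    rw [e]
    refine ENNReal.coe_le_coe.2 ?_
    rw [show ‖h n‖₊ = ‖(h n).toBCF‖₊ from rfl]
    exact (h n).toBCF.nnnorm_coe_le_nnnorm k
  exact lt_of_le_of_lt (iSup_le hb) ENNReal.coe_lt_top

lemma psi_lsc (B : Set ℕ) : psi h B = ⨆ (F : Finset ℕ) (_ : ↑F ⊆ B), psi h ↑F := by
  apply le_antisymm
  · apply iSup_le fun k => ?_
    rw [mu_eq_iSup h k B]
    refine iSup_le fun F => iSup_le fun hF => ?_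
    exact le_trans (mu_le_psi h k ↑F) (le_iSup_of_le F (le_iSup_of_le hF le_rfl))
  · exact iSup_le fun F => iSup_le fun hF => psi_mono h hF

lemma nnnorm_sum_le_psi (F : Finset ℕ) : (‖∑ n ∈ F, h n‖₊ : ℝ≥0∞) ≤ psi h ↑F := by
  by_cases htop : psi h ↑F = ⊤
  · exact htop ▸ le_top
  · have key : ∀ k, (‖(∑ n ∈ F, h n) k‖₊ : ℝ≥0∞) ≤ psi h ↑F := by
      intro k
      rw [sum_apply']
      calc (‖∑ n ∈ F, h n k‖₊ : ℝ≥0∞) ≤ ((∑ n ∈ F, ‖h n k‖₊ : NNReal) : ℝ≥0∞) :=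
            ENNReal.coe_le_coe.2 (nnnorm_sum_le _ _)
        _ = ∑ n ∈ F, (‖h n k‖₊ : ℝ≥0∞) := by rw [ENNReal.coe_finset_sum]
        _ = mu h k ↑F := (mu_finset h k F).symm
        _ ≤ psi h ↑F := mu_le_psi h k ↑F
    calc (‖∑ n ∈ F, h n‖₊ : ℝ≥0∞) ≤ ((psi h ↑F).toNNReal : ℝ≥0∞) := by
          refine ENNReal.coe_le_coe.2 (nnnorm_le_of_forall _ _ fun k => ?_)
          have := key k
          rwa [← ENNReal.coe_toNNReal htop, ENNReal.coe_le_coe] at this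
      _ = psi h ↑F := ENNReal.coe_toNNReal htop

lemma norm_sum_lt_of_vanishing {A : Set ℕ} {δ : ℝ} {s : Finset ↥A}
    (hs : ∀ t : Finset ↥A, Disjoint t s → ‖∑ b ∈ t, h ↑b‖ < δ)
    {N : ℕ} (hN : ∀ x ∈ s, (x : ℕ) < N)
    (G : Finset ℕ) (hG : ↑G ⊆ A \ Set.Iio N) : ‖∑ m ∈ G, h m‖ < δ := by
  classical
  have hGA : ∀ m ∈ G, m ∈ A := fun m hm => (hG hm).1
  set t : Finset ↥A := G.subtype (· ∈ A) with ht
  have himg : t.map (Function.Embedding.subtype _) = G := by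
    rw [ht, Finset.subtype_map, Finset.filter_true_of_mem hGA]
  have hsum : ∑ b ∈ t, h ↑b = ∑ m ∈ G, h m := by
    rw [← himg, Finset.sum_map]
    rfl
  have hdisj : Disjoint t s := by
    rw [Finset.disjoint_left]
    intro b hb hbs
    have h1 : (b : ℕ) ∈ G := by simpa [ht] using hb
    have h2 : (b : ℕ) < N := hN b hbs
    have h3 : ¬ (b : ℕ) < N := by
      have := hG h1
      simpa [Set.mem_diff] using this.2
    exact h3 h2
  rw [← hsum]
  exact hs t hdisj

lemma psi_tail_le_of_vanishing {A : Set ℕ} {δ : ℝ} {s : Finset ↥A}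
    (hs : ∀ t : Finset ↥A, Disjoint t s → ‖∑ b ∈ t, h ↑b‖ < δ)
    {N : ℕ} (hN : ∀ x ∈ s, (x : ℕ) < N) (n : ℕ) (hn : N ≤ n) :
    psi h (A \ Set.Iio n) ≤ ENNReal.ofReal (2 * δ) := by
  classical
  rw [psi_def]
  refine iSup_le fun k => ?_
  rw [mu_eq_iSup h k]
  refine iSup_le fun F => iSup_le fun hF => ?_
  have hF' : ↑F ⊆ A \ Set.Iio N := by
    refine hF.trans ?_
    intro x hx
    exact ⟨hx.1, fun hlt => hx.2 (lt_of_lt_of_le hlt hn)⟩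
  rw [mu_finset]
  have habs : ∀ n ∈ F, (‖h n k‖₊ : ℝ≥0∞) = ENNReal.ofReal |h n k| := by
    intro n _
    exact Real.enorm_eq_ofReal_abs _
  rw [Finset.sum_congr rfl habs, ← ENNReal.ofReal_sum_of_nonneg (fun n _ => abs_nonneg _)]
  refine ENNReal.ofReal_le_ofReal ?_
  set Fp : Finset ℕ := F.filter (fun m => 0 ≤ h m k) with hFp
  set Fm : Finset ℕ := F.filter (fun m => ¬ 0 ≤ h m k) with hFm
  have hsplit : ∑ m ∈ F, |h m k| = (∑ m ∈ Fp, |h m k|) + ∑ m ∈ Fm, |h m k| :=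
    (Finset.sum_filter_add_sum_filter_not F _ _).symm
  have hp : ∑ m ∈ Fp, |h m k| ≤ ‖∑ m ∈ Fp, h m‖ := by
    have e : ∑ m ∈ Fp, |h m k| = ∑ m ∈ Fp, h m k := by
      refine Finset.sum_congr rfl fun m hm => abs_of_nonneg ?_
      exact (Finset.mem_filter.1 hm).2
    rw [e]
    calc ∑ m ∈ Fp, h m k ≤ |∑ m ∈ Fp, h m k| := le_abs_self _
      _ = |(∑ m ∈ Fp, h m) k| := by rw [sum_apply']
      _ ≤ ‖∑ m ∈ Fp, h m‖ := abs_eval_le_norm _ k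
  have hm : ∑ m ∈ Fm, |h m k| ≤ ‖∑ m ∈ Fm, h m‖ := by
    have e : ∑ m ∈ Fm, |h m k| = -∑ m ∈ Fm, h m k := by
      rw [← Finset.sum_neg_distrib]
      refine Finset.sum_congr rfl fun m hm => abs_of_nonpos ?_
      exact le_of_not_ge (Finset.mem_filter.1 hm).2
    rw [e]
    calc -∑ m ∈ Fm, h m k ≤ |∑ m ∈ Fm, h m k| := neg_le_abs _
      _ = |(∑ m ∈ Fm, h m) k| := by rw [sum_apply']
      _ ≤ ‖∑ m ∈ Fm, h m‖ := abs_eval_le_norm _ k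
  have hpsub : ↑Fp ⊆ A \ Set.Iio N :=
    le_trans (by intro x hx; exact Finset.filter_subset _ _ hx) hF'
  have hmsub : ↑Fm ⊆ A \ Set.Iio N :=
    le_trans (by intro x hx; exact Finset.filter_subset _ _ hx) hF'
  have h1 := norm_sum_lt_of_vanishing h hs hN Fp hpsub
  have h2 := norm_sum_lt_of_vanishing h hs hN Fm hmsub
  calc ∑ m ∈ F, |h m k| ≤ ‖∑ m ∈ Fp, h m‖ + ‖∑ m ∈ Fm, h m‖ := by
        rw [hsplit]; exact add_le_add hp hm
    _ ≤ δ + δ := add_le_add h1.le h2.le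
    _ = 2 * δ := by ring

lemma psi_exh_iff (A : Set ℕ) :
    Summable (fun n : A => h n) ↔
      Tendsto (fun N : ℕ => psi h (A \ Set.Iio N)) atTop (𝓝 0) := by
  classical
  constructor
  · intro hsum
    rw [ENNReal.tendsto_atTop_zero]
    intro ε hε
    obtain ⟨δ, hδ, hδε⟩ : ∃ δ : ℝ, 0 < δ ∧ ENNReal.ofReal (2 * δ) ≤ ε := by
      rcases eq_or_ne ε ⊤ with rfl | hne
      · exact ⟨1, one_pos, le_top⟩
      · have h0 : 0 < ε.toReal := ENNReal.toReal_pos hε.ne' hne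
        refine ⟨ε.toReal / 2, by positivity, ?_⟩
        rw [mul_div_cancel₀ _ (two_ne_zero), ENNReal.ofReal_toReal hne]
    obtain ⟨s, hs⟩ := (summable_iff_vanishing.1 hsum) (Metric.ball 0 δ) (Metric.ball_mem_nhds 0 hδ)
    have hs' : ∀ t : Finset ↥A, Disjoint t s → ‖∑ b ∈ t, h ↑b‖ < δ := by
      intro t ht
      have := hs t ht
      rwa [Metric.mem_ball, dist_zero_right] at this
    set N : ℕ := (s.image (Subtype.val)).sup id + 1 with hNdef
    have hN : ∀ x ∈ s, (x : ℕ) < N := by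
      intro x hx
      have : (x : ℕ) ≤ (s.image (Subtype.val)).sup id :=
        Finset.le_sup (f := id) (Finset.mem_image_of_mem _ hx)
      omega
    exact ⟨N, fun n hn => le_trans (psi_tail_le_of_vanishing h hs' hN n hn) hδε⟩
  · intro htend
    rw [summable_iff_vanishing]
    intro e he
    obtain ⟨δ, hδ, hball⟩ := Metric.mem_nhds_iff.1 he
    obtain ⟨N, hN⟩ := (ENNReal.tendsto_atTop_zero.1 htend) (ENNReal.ofReal (δ / 2))
      (by simp [ENNReal.ofReal_pos, hδ])
    set s : Finset ↥A := (Finset.range N).subtype (· ∈ A) with hsdef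
    refine ⟨s, fun t ht => ?_⟩
    set G : Finset ℕ := t.map (Function.Embedding.subtype _) with hG
    have hsum : ∑ b ∈ t, h ↑b = ∑ m ∈ G, h m := by rw [hG, Finset.sum_map]; rfl
    have hGsub : ↑G ⊆ A \ Set.Iio N := by
      intro m hm
      simp only [hG, Finset.coe_map, Set.mem_image] at hm
      obtain ⟨b, hb, rfl⟩ := hm
      refine ⟨b.2, fun hlt => ?_⟩
      have hbs : b ∈ s := by
        rw [hsdef, Finset.mem_subtype]
        simpa using hlt
      exact (Finset.disjoint_left.1 ht) hb hbs
    have hle : (‖∑ m ∈ G, h m‖₊ : ℝ≥0∞) ≤ ENNReal.ofReal (δ / 2) :=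
      le_trans (le_trans (nnnorm_sum_le_psi h G) (psi_mono h hGsub)) (hN N le_rfl)
    have hnorm : ‖∑ m ∈ G, h m‖ < δ := by
      rw [← ENNReal.ofReal_coe_nnreal, coe_nnnorm] at hle
      have := (ENNReal.ofReal_le_ofReal_iff (by positivity)).1 hle
      linarith
    apply hball
    rw [hsum, Metric.mem_ball, dist_zero_right]
    exact hnorm

lemma mu_tail_tendsto (k : ℕ) (hC : mu h k Set.univ ≠ ⊤) :
    Tendsto (fun N : ℕ => mu h k (Set.univ \ Set.Iio N)) atTop (𝓝 0) := by
  have hg : ∑' n, (‖h n k‖₊ : ℝ≥0∞) ≠ ⊤ := by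
    have e : mu h k Set.univ = ∑' n, (‖h n k‖₊ : ℝ≥0∞) := by
      simp only [mu]; exact tsum_univ fun n => (‖h n k‖₊ : ℝ≥0∞)
    rwa [e] at hC
  have hbound : ∀ N : ℕ, mu h k (Set.univ \ Set.Iio N) ≤ ∑' j, (‖h (j + N) k‖₊ : ℝ≥0∞) := by
    intro N
    refine ENNReal.summable.tsum_le_tsum_of_inj (fun b => (b : ℕ) - N) ?_ (fun c _ => zero_le)
      (fun b => ?_) ENNReal.summable
    · intro x y hxy
      have hxy' : (x : ℕ) - N = (y : ℕ) - N := hxy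
      have hx : ¬ (x : ℕ) < N := fun hh => x.2.2 hh
      have hy : ¬ (y : ℕ) < N := fun hh => y.2.2 hh
      exact Subtype.ext (by omega)
    · have hb : ¬ (b : ℕ) < N := fun hh => b.2.2 hh
      have e : (b : ℕ) - N + N = (b : ℕ) := by omega
      rw [e]
  refine tendsto_of_tendsto_of_tendsto_of_le_of_le tendsto_const_nhds
    (ENNReal.tendsto_sum_nat_add _ hg) (fun N => zero_le) hbound

lemma mu_init_tendsto (N : ℕ) :
    Tendsto (fun k : ℕ => mu h k (Set.Iio N)) atTop (𝓝 0) := by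
  have e : ∀ k, mu h k (Set.Iio N) = ∑ n ∈ Finset.range N, (‖h n k‖₊ : ℝ≥0∞) := by
    intro k
    rw [← Finset.coe_range, mu_finset]
  simp only [e]
  have h0 : (0 : ℝ≥0∞) = ∑ n ∈ Finset.range N, (0 : ℝ≥0∞) := by simp
  rw [h0]
  refine tendsto_finset_sum _ fun n _ => ?_
  have h1 : Tendsto (h n) atTop (𝓝 0) := by
    have := (h n).zero_at_infty'
    rwa [cocompact_eq_atTop] at this
  have h2 : Tendsto (fun k => ‖h n k‖₊) atTop (𝓝 0) := by
    simpa using h1.nnnorm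
  exact (ENNReal.tendsto_coe).2 h2

lemma exists_step (hC : ∀ k, mu h k Set.univ ≠ ⊤) (j n k : ℕ) :
    ∃ n' k', n < n' ∧ k < k' ∧
      (∀ i < k, mu h i (Set.univ \ Set.Iio n') < (2⁻¹ : ℝ≥0∞) ^ j) ∧
      (∀ i ≥ k', mu h i (Set.Iio n') < (2⁻¹ : ℝ≥0∞) ^ j) := by
  set ε : ℝ≥0∞ := (2⁻¹ : ℝ≥0∞) ^ j with hε
  have hεpos : 0 < ε := by
    apply ENNReal.pow_pos
    simp [ENNReal.inv_pos]
  have h1 : ∀ᶠ n' in atTop, ∀ i ∈ Finset.range k, mu h i (Set.univ \ Set.Iio n') < ε := by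
    rw [Filter.eventually_all_finset]
    exact fun i _ => (mu_tail_tendsto h i (hC i)).eventually_lt_const hεpos
  obtain ⟨n', hn'1, hn'2⟩ := (h1.and (eventually_gt_atTop n)).exists
  obtain ⟨k₀, hk₀⟩ := eventually_atTop.1 ((mu_init_tendsto h n').eventually_lt_const hεpos)
  refine ⟨n', max k₀ (k + 1), hn'2, by omega, fun i hi => hn'1 i (Finset.mem_range.2 hi), ?_⟩
  intro i hi
  exact hk₀ i (le_trans (le_max_left _ _) hi)

noncomputable def seq (hC : ∀ k, mu h k Set.univ ≠ ⊤) : ℕ → ℕ × ℕ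
  | 0 => (0, 0)
  | j + 1 =>
    let p := seq hC j
    ⟨(exists_step h hC j p.1 p.2).choose,
     (exists_step h hC j p.1 p.2).choose_spec.choose⟩

lemma seq_spec (hC : ∀ k, mu h k Set.univ ≠ ⊤) (j : ℕ) :
    (seq h hC j).1 < (seq h hC (j + 1)).1 ∧ (seq h hC j).2 < (seq h hC (j + 1)).2 ∧
      (∀ i < (seq h hC j).2,
        mu h i (Set.univ \ Set.Iio (seq h hC (j + 1)).1) < (2⁻¹ : ℝ≥0∞) ^ j) ∧
      (∀ i ≥ (seq h hC (j + 1)).2,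
        mu h i (Set.Iio (seq h hC (j + 1)).1) < (2⁻¹ : ℝ≥0∞) ^ j) := by
  have hspec := (exists_step h hC j (seq h hC j).1 (seq h hC j).2).choose_spec.choose_spec
  exact ⟨hspec.1, hspec.2.1, hspec.2.2.1, hspec.2.2.2⟩

lemma seq_K_strict (hC : ∀ k, mu h k Set.univ ≠ ⊤) : StrictMono fun j => (seq h hC j).2 :=
  strictMono_nat_of_lt_succ fun j => (seq_spec h hC j).2.1

lemma exists_block (hC : ∀ k, mu h k Set.univ ≠ ⊤) (k : ℕ) :
    ∃ j, (seq h hC j).2 ≤ k ∧ k < (seq h hC (j + 1)).2 := by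
  induction k with
  | zero =>
    refine ⟨0, le_refl _, ?_⟩
    have := (seq_spec h hC 0).2.1
    omega
  | succ k ih =>
    obtain ⟨j, hj1, hj2⟩ := ih
    by_cases hcase : k + 1 < (seq h hC (j + 1)).2
    · exact ⟨j, by omega, hcase⟩
    · refine ⟨j + 1, by omega, ?_⟩
      have := (seq_spec h hC (j + 1)).2.1
      omega

end Stmt11Aux

/-- a totally bounded ideal representable in `c₀` is a generalized density
ideal. -/
theorem stmt11 (J : Set (Set ℕ))
    (hfin : ∀ A : Set ℕ, A.Finite → A ∈ J)
    (hdown : ∀ A B : Set ℕ, A ⊆ B → B ∈ J → A ∈ J)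
    (hunion : ∀ A B : Set ℕ, A ∈ J → B ∈ J → A ∪ B ∈ J)
    (hproper : Set.univ ∉ J)
    (hrep : ∃ h : ℕ → C₀(ℕ, ℝ), ∀ A : Set ℕ, A ∈ J ↔ Summable (fun n : A => h n))
    (htb : ∀ φ : Set ℕ → ENNReal,
      φ ∅ = 0 →
      (∀ A B : Set ℕ, A ⊆ B → φ A ≤ φ B) →
      (∀ A B : Set ℕ, φ (A ∪ B) ≤ φ A + φ B) →
      (∀ n : ℕ, φ {n} < ⊤) →
      (∀ A : Set ℕ, φ A = ⨆ (F : Finset ℕ) (_ : ↑F ⊆ A), φ ↑F) →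
      (∀ A : Set ℕ, A ∈ J ↔ Tendsto (fun N : ℕ => φ (A \ Set.Iio N)) atTop (𝓝 0)) →
      φ Set.univ < ⊤) :
    ∃ (φs : ℕ → Set ℕ → ENNReal) (S : ℕ → Finset ℕ),
      (∀ i j : ℕ, i ≠ j → Disjoint (S i) (S j)) ∧
      (∀ j : ℕ, φs j ∅ = 0) ∧
      (∀ j : ℕ, ∀ A B : Set ℕ, A ⊆ B → φs j A ≤ φs j B) ∧
      (∀ j : ℕ, ∀ A B : Set ℕ, φs j (A ∪ B) ≤ φs j A + φs j B) ∧
      (∀ j : ℕ, ∀ A : Set ℕ, φs j A = φs j (A ∩ ↑(S j))) ∧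
      (∀ A : Set ℕ, A ∈ J ↔ Tendsto (fun j : ℕ => φs j A) atTop (𝓝 0)) := by
  classical
  obtain ⟨h, hrep⟩ := hrep
  open Stmt11Aux in
  have hexh : ∀ A : Set ℕ,
      A ∈ J ↔ Tendsto (fun N : ℕ => Stmt11Aux.psi h (A \ Set.Iio N)) atTop (𝓝 0) :=
    fun A => (hrep A).trans (Stmt11Aux.psi_exh_iff h A)
  have hfin' : Stmt11Aux.psi h Set.univ < ⊤ :=
    htb (Stmt11Aux.psi h) (Stmt11Aux.psi_empty h) (fun A B hAB => Stmt11Aux.psi_mono h hAB)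
      (Stmt11Aux.psi_union_le h) (Stmt11Aux.psi_singleton_lt_top h) (Stmt11Aux.psi_lsc h) hexh
  have hC : ∀ k, Stmt11Aux.mu h k Set.univ ≠ ⊤ :=
    fun k => ((Stmt11Aux.mu_le_psi h k _).trans_lt hfin').ne
  set N : ℕ → ℕ := fun j => (Stmt11Aux.seq h hC j).1 with hNdef
  set K : ℕ → ℕ := fun j => (Stmt11Aux.seq h hC j).2 with hKdef
  have hNmono : StrictMono N := strictMono_nat_of_lt_succ fun j => (Stmt11Aux.seq_spec h hC j).1
  have hKmono : StrictMono K := Stmt11Aux.seq_K_strict h hC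
  refine ⟨fun j A => Stmt11Aux.psi h (A ∩ Set.Ico (N j) (N (j + 1))),
    fun j => Finset.Ico (N j) (N (j + 1)), ?_, ?_, ?_, ?_, ?_, ?_⟩
  · intro i j hij
    rw [Finset.disjoint_left]
    intro x hx1 hx2
    rw [Finset.mem_Ico] at hx1 hx2
    rcases lt_or_gt_of_ne hij with hlt | hlt
    · have : N (i + 1) ≤ N j := hNmono.monotone (by omega)
      omega
    · have : N (j + 1) ≤ N i := hNmono.monotone (by omega)
      omega
  · intro j
    beta_reduce
    rw [Set.empty_inter]
    exact Stmt11Aux.psi_empty h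
  · intro j A B hAB
    exact Stmt11Aux.psi_mono h (Set.inter_subset_inter_left _ hAB)
  · intro j A B
    beta_reduce
    rw [Set.union_inter_distrib_right]
    exact Stmt11Aux.psi_union_le h _ _
  · intro j A
    beta_reduce
    rw [Finset.coe_Ico, Set.inter_assoc, Set.inter_self]
  · intro A
    rw [hexh A]
    constructor
    · intro htend
      have hcomp : Tendsto (fun j => Stmt11Aux.psi h (A \ Set.Iio (N j))) atTop (𝓝 0) :=
        htend.comp hNmono.tendsto_atTop
      refine tendsto_of_tendsto_of_tendsto_of_le_of_le tendsto_const_nhds hcomp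
        (fun j => zero_le) (fun j => Stmt11Aux.psi_mono h ?_)
      intro x hx
      exact ⟨hx.1, not_lt.2 hx.2.1⟩
    · intro htend
      rw [ENNReal.tendsto_atTop_zero]
      intro ε hε
      set δ : ℝ≥0∞ := ε / 8 with hδdef
      have hδpos : 0 < δ := ENNReal.div_pos hε.ne' (by norm_num)
      have hδ4 : δ + δ + δ + δ ≤ ε := by
        have h4 : δ + δ + δ + δ = 4 * δ := by ring
        have h48 : (4 : ℝ≥0∞) * δ ≤ 8 * δ := mul_le_mul_left (by norm_num) δ
        calc δ + δ + δ + δ = 4 * δ := h4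
          _ ≤ 8 * δ := h48
          _ ≤ ε := by rw [hδdef]; exact ENNReal.mul_div_le
      obtain ⟨m₁, hm₁⟩ := ENNReal.tendsto_atTop_zero.1 htend δ hδpos
      obtain ⟨m₂, hm₂⟩ := ENNReal.tendsto_atTop_zero.1
        (ENNReal.tendsto_pow_atTop_nhds_zero_of_lt_one
          (by rw [ENNReal.inv_lt_one]; exact ENNReal.one_lt_two)) δ hδpos
      set m : ℕ := max m₁ m₂ + 1 with hmdef
      refine ⟨N m, fun n hn => ?_⟩
      have hsub : A \ Set.Iio n ⊆ A \ Set.Iio (N m) := by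
        intro x hx
        exact ⟨hx.1, fun hlt => hx.2 (lt_of_lt_of_le hlt hn)⟩
      refine le_trans (Stmt11Aux.psi_mono h hsub) ?_
      rw [Stmt11Aux.psi_def]
      refine iSup_le fun k => ?_
      obtain ⟨j, hKj, hKj1⟩ := Stmt11Aux.exists_block h hC k
      by_cases hcase : j < m
      · -- small k case
        have hkKm : k < K m := lt_of_lt_of_le hKj1 (hKmono.monotone (by omega))
        have hsplit : A \ Set.Iio (N m) ⊆
            (A ∩ Set.Ico (N m) (N (m + 1))) ∪ (Set.univ \ Set.Iio (N (m + 1))) := by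
          intro x hx
          by_cases hx2 : x < N (m + 1)
          · left
            exact ⟨hx.1, le_of_not_gt hx.2, hx2⟩
          · right
            exact ⟨trivial, hx2⟩
        have hb1 : Stmt11Aux.mu h k (A ∩ Set.Ico (N m) (N (m + 1))) ≤ δ :=
          le_trans (Stmt11Aux.mu_le_psi h k _) (hm₁ m (by omega))
        have hb2 : Stmt11Aux.mu h k (Set.univ \ Set.Iio (N (m + 1))) ≤ δ :=
          le_trans ((Stmt11Aux.seq_spec h hC m).2.2.1 k hkKm).le (hm₂ m (by omega))
        calc Stmt11Aux.mu h k (A \ Set.Iio (N m))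
            ≤ Stmt11Aux.mu h k ((A ∩ Set.Ico (N m) (N (m + 1))) ∪ (Set.univ \ Set.Iio (N (m + 1)))) :=
              Stmt11Aux.mu_mono h k hsplit
          _ ≤ Stmt11Aux.mu h k (A ∩ Set.Ico (N m) (N (m + 1)))
              + Stmt11Aux.mu h k (Set.univ \ Set.Iio (N (m + 1))) := Stmt11Aux.mu_union_le h k _ _
          _ ≤ δ + δ := add_le_add hb1 hb2
          _ ≤ δ + δ + δ + δ := (self_le_add_right _ _).trans (self_le_add_right _ _)
          _ ≤ ε := hδ4
      · -- large k case
        have hm_le : m ≤ j := not_lt.1 hcase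
        obtain ⟨j', rfl⟩ : ∃ j', j = j' + 1 := ⟨j - 1, by omega⟩
        have hsplit : A \ Set.Iio (N m) ⊆
            ((Set.Iio (N (j' + 1)) ∪ (A ∩ Set.Ico (N (j' + 1)) (N (j' + 2))))
              ∪ (A ∩ Set.Ico (N (j' + 2)) (N (j' + 3))))
              ∪ (Set.univ \ Set.Iio (N (j' + 3))) := by
          intro x hx
          by_cases hx1 : x < N (j' + 1)
          · exact Or.inl (Or.inl (Or.inl hx1))
          · by_cases hx2 : x < N (j' + 2)
            · exact Or.inl (Or.inl (Or.inr ⟨hx.1, le_of_not_gt hx1, hx2⟩))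
            · by_cases hx3 : x < N (j' + 3)
              · exact Or.inl (Or.inr ⟨hx.1, le_of_not_gt hx2, hx3⟩)
              · exact Or.inr ⟨trivial, hx3⟩
        have hb1 : Stmt11Aux.mu h k (Set.Iio (N (j' + 1))) ≤ δ :=
          le_trans ((Stmt11Aux.seq_spec h hC j').2.2.2 k hKj).le (hm₂ j' (by omega))
        have hb2 : Stmt11Aux.mu h k (A ∩ Set.Ico (N (j' + 1)) (N (j' + 2))) ≤ δ :=
          le_trans (Stmt11Aux.mu_le_psi h k _) (hm₁ (j' + 1) (by omega))
        have hb3 : Stmt11Aux.mu h k (A ∩ Set.Ico (N (j' + 2)) (N (j' + 3))) ≤ δ :=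
          le_trans (Stmt11Aux.mu_le_psi h k _) (hm₁ (j' + 2) (by omega))
        have hb4 : Stmt11Aux.mu h k (Set.univ \ Set.Iio (N (j' + 3))) ≤ δ :=
          le_trans ((Stmt11Aux.seq_spec h hC (j' + 2)).2.2.1 k hKj1).le (hm₂ (j' + 2) (by omega))
        calc Stmt11Aux.mu h k (A \ Set.Iio (N m))
            ≤ Stmt11Aux.mu h k (((Set.Iio (N (j' + 1)) ∪ (A ∩ Set.Ico (N (j' + 1)) (N (j' + 2))))
                ∪ (A ∩ Set.Ico (N (j' + 2)) (N (j' + 3))))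
                ∪ (Set.univ \ Set.Iio (N (j' + 3)))) := Stmt11Aux.mu_mono h k hsplit
          _ ≤ Stmt11Aux.mu h k ((Set.Iio (N (j' + 1)) ∪ (A ∩ Set.Ico (N (j' + 1)) (N (j' + 2))))
                ∪ (A ∩ Set.Ico (N (j' + 2)) (N (j' + 3))))
              + Stmt11Aux.mu h k (Set.univ \ Set.Iio (N (j' + 3))) := Stmt11Aux.mu_union_le h k _ _
          _ ≤ (Stmt11Aux.mu h k (Set.Iio (N (j' + 1)) ∪ (A ∩ Set.Ico (N (j' + 1)) (N (j' + 2))))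
                + Stmt11Aux.mu h k (A ∩ Set.Ico (N (j' + 2)) (N (j' + 3))))
              + Stmt11Aux.mu h k (Set.univ \ Set.Iio (N (j' + 3))) :=
              add_le_add_left (Stmt11Aux.mu_union_le h k _ _) _
          _ ≤ ((Stmt11Aux.mu h k (Set.Iio (N (j' + 1)))
                + Stmt11Aux.mu h k (A ∩ Set.Ico (N (j' + 1)) (N (j' + 2))))
                + Stmt11Aux.mu h k (A ∩ Set.Ico (N (j' + 2)) (N (j' + 3))))
              + Stmt11Aux.mu h k (Set.univ \ Set.Iio (N (j' + 3))) :=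
              add_le_add_left (add_le_add_left (Stmt11Aux.mu_union_le h k _ _) _) _
          _ ≤ ((δ + δ) + δ) + δ := by
              exact add_le_add (add_le_add (add_le_add hb1 hb2) hb3) hb4
          _ ≤ ε := hδ4
end
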